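/- arXiv:1304.6707 — 5 statements merged into one kernel-verified Lean document; each statement's English description precedes it below -/
import Mathlib

section
/- Let 1 ≤ i ≤ n and let j be an integer with j ≥ i. Then τ(v_i, q^{j−i}) ≤ τ′(v_i, q^j) ≤ τ(v_i, q^j) (as elements of ℝ ∪ {−∞,+∞}). -/
open scoped BigOperators

/-- `IsWalk src dst u v p` : the list of edges `p` forms a directed walk from `u` to `v`
in the multigraph whose edges `e` go from `src e` to `dst e`. -/
def IsWalk {V E : Type} (src dst : E → V) : V → V → List E → Prop
  | u, v, [] => u = v
  | u, v, e :: p => src e = u ∧ IsWalk src dst (dst e) v p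

/-- `tau src dst w s v a` : the smallest threshold `L ∈ ℝ` (as an element of
`ℝ ∪ {−∞, +∞}`) such that at least `a` directed `s`–`v` paths have weight at most `L`;
it is `−∞` when `a ≤ 0` and `+∞` when `a` exceeds the total number of `s`–`v` paths. -/
noncomputable def tau {V E : Type} (src dst : E → V) (w : E → ℝ) (s v : V) (a : ℝ) : EReal :=
  sInf {x : EReal | ∃ L : ℝ, x = (L : EReal) ∧
    a ≤ (Nat.card {p : List E // IsWalk src dst s v p ∧ (p.map w).sum ≤ L} : ℝ)}

set_option linter.unusedSectionVars false
set_option maxHeartbeats 1000000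


lemma nat_card_sigma {ι : Type} [Fintype ι] (f : ι → Type) [∀ i, Finite (f i)] :
    Nat.card (Σ i, f i) = ∑ i, Nat.card (f i) := by
  classical
  letI : ∀ i, Fintype (f i) := fun i => Fintype.ofFinite _
  simp [Nat.card_eq_fintype_card, Fintype.card_sigma]

section Aux

variable {n : ℕ} {E : Type} [Fintype E] (src dst : E → Fin n) (w : E → ℝ)

lemma isWalk_concat {e : E} : ∀ {p : List E} {u v : Fin n},
    IsWalk src dst u v (p ++ [e]) ↔ IsWalk src dst u (src e) p ∧ dst e = v := by
  intro p
  induction p with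
  | nil => intro u v; simp [IsWalk, eq_comm]
  | cons f p ih => intro u v; simp [IsWalk, ih, and_assoc]

lemma walk_chain (htopo : ∀ e, src e < dst e) :
    ∀ (p : List E) (u v : Fin n), IsWalk src dst u v p →
      p.Chain' (fun a b => src a < src b) := by
  intro p
  induction p with
  | nil => intro u v _; exact List.isChain_nil
  | cons e p ih =>
    intro u v h
    obtain ⟨he, hw⟩ := h
    cases p with
    | nil => exact List.isChain_singleton _
    | cons f p' =>
      exact List.isChain_cons_cons.mpr ⟨hw.1 ▸ htopo e, ih _ _ hw⟩

lemma walk_nodup (htopo : ∀ e, src e < dst e) {p : List E} {u v : Fin n}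
    (h : IsWalk src dst u v p) : p.Nodup := by
  have hc := walk_chain src dst htopo p u v h
  have : IsTrans E (fun a b => src a < src b) := ⟨fun a b c hab hbc => hab.trans hbc⟩
  exact (List.isChain_iff_pairwise.mp hc).imp (fun {a b} hlt => by
    intro hab; exact absurd (hab ▸ hlt) (lt_irrefl _))

lemma walk_finite (htopo : ∀ e, src e < dst e) (s v : Fin n) :
    {p : List E | IsWalk src dst s v p}.Finite := by
  apply (List.finite_length_le E (Fintype.card E)).subset
  intro p hp
  exact (walk_nodup src dst htopo hp).length_le_card

noncomputable def Ncnt (s v : Fin n) (L : ℝ) : ℕ :=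
  Nat.card {p : List E // IsWalk src dst s v p ∧ (p.map w).sum ≤ L}

lemma tau_eq (s v : Fin n) (a : ℝ) :
    tau src dst w s v a
      = sInf {x : EReal | ∃ L : ℝ, x = (L : EReal) ∧ a ≤ (Ncnt src dst w s v L : ℝ)} := rfl

lemma sub_finite (htopo : ∀ e, src e < dst e) (s v : Fin n) (L : ℝ) :
    Finite {p : List E // IsWalk src dst s v p ∧ (p.map w).sum ≤ L} :=
  Set.Finite.to_subtype ((walk_finite src dst htopo s v).subset (fun p hp => hp.1))

lemma Ncnt_mono (htopo : ∀ e, src e < dst e) (s v : Fin n) {L L' : ℝ} (h : L ≤ L') :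
    Ncnt src dst w s v L ≤ Ncnt src dst w s v L' := by
  haveI := sub_finite src dst w htopo s v L'
  exact Nat.card_le_card_of_injective
    (fun x => ⟨x.1, x.2.1, x.2.2.trans h⟩)
    (fun a b hab => Subtype.ext (by simpa using congrArg Subtype.val hab))

lemma exists_bound (htopo : ∀ e, src e < dst e) (s v : Fin n) :
    ∃ B : ℝ, ∀ L : ℝ, L < B → Ncnt src dst w s v L = 0 := by
  by_cases hne : {p : List E | IsWalk src dst s v p}.Nonempty
  · obtain ⟨p0, hp0, hmin⟩ := Set.exists_min_image _ (fun p => (p.map w).sum)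
      (walk_finite src dst htopo s v) hne
    refine ⟨(p0.map w).sum, fun L hL => ?_⟩
    have : IsEmpty {p : List E // IsWalk src dst s v p ∧ (p.map w).sum ≤ L} := by
      constructor; rintro ⟨p, hw, hs⟩
      exact absurd (le_trans (hmin p hw) hs) (not_le.mpr hL)
    exact Nat.card_of_isEmpty
  · refine ⟨0, fun L _ => ?_⟩
    have : IsEmpty {p : List E // IsWalk src dst s v p ∧ (p.map w).sum ≤ L} := by
      constructor; rintro ⟨p, hw, _⟩
      exact hne ⟨p, hw⟩
    exact Nat.card_of_isEmpty

lemma tau_le_of (s v : Fin n) {a L : ℝ} (h : a ≤ (Ncnt src dst w s v L : ℝ)) :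
    tau src dst w s v a ≤ (L : EReal) :=
  sInf_le ⟨L, rfl, h⟩

lemma le_Ncnt_of_tau_le (htopo : ∀ e, src e < dst e) (s v : Fin n) {a L : ℝ}
    (h : tau src dst w s v a ≤ (L : EReal)) : a ≤ (Ncnt src dst w s v L : ℝ) := by
  have step1 : ∀ ε : ℝ, 0 < ε → a ≤ (Ncnt src dst w s v (L + ε) : ℝ) := by
    intro ε hε
    have hlt : tau src dst w s v a < ((L + ε : ℝ) : EReal) :=
      lt_of_le_of_lt h (by exact_mod_cast EReal.coe_lt_coe_iff.mpr (by linarith))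
    rw [tau_eq] at hlt
    obtain ⟨x, ⟨L'', rfl, hC⟩, hxlt⟩ := sInf_lt_iff.mp hlt
    have hL'' : L'' < L + ε := by exact_mod_cast hxlt
    calc a ≤ (Ncnt src dst w s v L'' : ℝ) := hC
      _ ≤ _ := by exact_mod_cast Ncnt_mono src dst w htopo s v hL''.le
  -- step 2 : find ε>0 with every walk of weight ≤ L+ε having weight ≤ L
  obtain ⟨ε, hε, hgood⟩ : ∃ ε : ℝ, 0 < ε ∧ ∀ p : List E, IsWalk src dst s v p →
      (p.map w).sum ≤ L + ε → (p.map w).sum ≤ L := by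
    by_cases hne : {p : List E | IsWalk src dst s v p ∧ L < (p.map w).sum}.Nonempty
    · obtain ⟨p0, hp0, hmin⟩ := Set.exists_min_image _ (fun p => (p.map w).sum)
        (((walk_finite src dst htopo s v).subset (fun p hp => hp.1)).subset
          (fun p hp => hp)) hne
      refine ⟨((p0.map w).sum - L) / 2, by simpa using hp0.2, fun p hw hs => ?_⟩
      by_contra hgt
      have := hmin p ⟨hw, not_le.mp hgt⟩
      linarith
    · refine ⟨1, one_pos, fun p hw _ => ?_⟩
      by_contra hgt
      exact hne ⟨p, hw, not_le.mp hgt⟩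
  have hle : Ncnt src dst w s v (L + ε) ≤ Ncnt src dst w s v L := by
    haveI := sub_finite src dst w htopo s v L
    exact Nat.card_le_card_of_injective
      (fun x => ⟨x.1, x.2.1, hgood x.1 x.2.1 x.2.2⟩)
      (fun a b hab => Subtype.ext (by simpa using congrArg Subtype.val hab))
  calc a ≤ (Ncnt src dst w s v (L + ε) : ℝ) := step1 ε hε
    _ ≤ _ := by exact_mod_cast hle

lemma tau_ne_bot (htopo : ∀ e, src e < dst e) (s v : Fin n) {a : ℝ} (ha : 0 < a) :
    tau src dst w s v a ≠ ⊥ := by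
  intro hbot
  obtain ⟨B, hB⟩ := exists_bound src dst w htopo s v
  have h1 : tau src dst w s v a ≤ ((B - 1 : ℝ) : EReal) := hbot ▸ bot_le
  have h2 := le_Ncnt_of_tau_le src dst w htopo s v h1
  rw [hB (B - 1) (by linarith)] at h2
  norm_num at h2
  linarith

lemma Ncnt_source (htopo : ∀ e, src e < dst e) (n0 : 0 < n) (L : ℝ) :
    Ncnt src dst w ⟨0, n0⟩ ⟨0, n0⟩ L = if 0 ≤ L then 1 else 0 := by
  have hwalk : ∀ p : List E, IsWalk src dst ⟨0, n0⟩ ⟨0, n0⟩ p → p = [] := by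
    intro p hp
    rcases List.eq_nil_or_concat p with h | ⟨p', e, rfl⟩
    · exact h
    · exfalso
      rw [List.concat_eq_append] at hp
      have h2 := (isWalk_concat src dst).mp hp
      have := htopo e
      rw [h2.2] at this
      exact absurd this (by simp [Fin.lt_def])
  split_ifs with hL
  · have : Unique {p : List E // IsWalk src dst ⟨0, n0⟩ ⟨0, n0⟩ p ∧ (p.map w).sum ≤ L} := by
      refine ⟨⟨⟨[], rfl, by simpa using hL⟩⟩, ?_⟩
      rintro ⟨p, hw, hs⟩
      exact Subtype.ext (hwalk p hw)
    exact Nat.card_eq_one_iff_unique.mpr ⟨this.instSubsingleton, ⟨this.default⟩⟩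
  · have : IsEmpty {p : List E // IsWalk src dst ⟨0, n0⟩ ⟨0, n0⟩ p ∧ (p.map w).sum ≤ L} := by
      constructor
      rintro ⟨p, hw, hs⟩
      rw [hwalk p hw] at hs
      simp at hs
      exact hL hs
    exact Nat.card_of_isEmpty

lemma Ncnt_rec (htopo : ∀ e, src e < dst e) (s v : Fin n) (hv : s ≠ v) (L : ℝ) :
    Ncnt src dst w s v L
      = ∑ e ∈ Finset.univ.filter (fun e => dst e = v),
          Ncnt src dst w s (src e) (L - w e) := by
  classical
  haveI : ∀ e : {e : E // dst e = v}, Finite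
      {p : List E // IsWalk src dst s (src e.1) p ∧ (p.map w).sum ≤ L - w e.1} :=
    fun e => sub_finite src dst w htopo s (src e.1) (L - w e.1)
  have key : Nat.card (Σ e : {e : E // dst e = v},
      {p : List E // IsWalk src dst s (src e.1) p ∧ (p.map w).sum ≤ L - w e.1})
      = Ncnt src dst w s v L := by
    apply Nat.card_eq_of_bijective
      (fun x => ⟨x.2.1 ++ [x.1.1],
        (isWalk_concat src dst).mpr ⟨x.2.2.1, x.1.2⟩,
        by simp only [List.map_append, List.sum_append, List.map_cons, List.map_nil,
             List.sum_cons, List.sum_nil, add_zero]; linarith [x.2.2.2]⟩)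
    constructor
    · rintro ⟨⟨e, he⟩, ⟨p, hp⟩⟩ ⟨⟨e', he'⟩, ⟨p', hp'⟩⟩ hfeq
      simp only [Subtype.mk.injEq] at hfeq
      obtain ⟨h1, h2⟩ := List.append_inj' hfeq rfl
      simp only [List.cons.injEq, and_true] at h2
      subst h2; subst h1
      rfl
    · rintro ⟨p, hw, hs⟩
      rcases List.eq_nil_or_concat p with rfl | ⟨p', e, rfl⟩
      · exact absurd hw hv
      · rw [List.concat_eq_append] at hw hs
        have h2 := (isWalk_concat src dst).mp hw
        have hsum : (p'.map w).sum ≤ L - w e := by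
          simp only [List.map_append, List.sum_append, List.map_cons, List.map_nil,
            List.sum_cons, List.sum_nil, add_zero] at hs
          linarith
        exact ⟨⟨⟨e, h2.2⟩, ⟨p', h2.1, hsum⟩⟩, Subtype.ext List.concat_eq_append.symm⟩
  rw [← key, nat_card_sigma]
  exact (Finset.sum_subtype (Finset.univ.filter (fun e => dst e = v)) (fun x => by simp)
    (fun e => Ncnt src dst w s (src e) (L - w e))).symm

end Aux

theorem stmt0
    {n : ℕ} (hn : 0 < n) {E : Type} [Fintype E]
    (src dst : E → Fin n) (w : E → ℝ)
    (htopo : ∀ e, src e < dst e)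
    (hin : ∀ v : Fin n, v ≠ ⟨0, hn⟩ → ∃ e, dst e = v)
    (q : ℝ) (hq : 1 < q)
    (T : Fin n → ℝ → EReal)
    (hT0 : ∀ v : Fin n, T v 0 = ⊥)
    (hTs1 : ∀ a : ℝ, 0 < a → a ≤ 1 → T ⟨0, hn⟩ a = 0)
    (hTs2 : ∀ a : ℝ, 1 < a → T ⟨0, hn⟩ a = ⊤)
    (hTrec : ∀ v : Fin n, v ≠ ⟨0, hn⟩ → ∀ j : ℤ,
      T v (q ^ j) = sInf {x : EReal |
        ∃ α : E → ℝ, (∀ e, dst e = v → 0 ≤ α e) ∧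
          (∑ e ∈ Finset.univ.filter (fun e => dst e = v), α e) = 1 ∧
          x = (Finset.univ.filter (fun e => dst e = v)).sup
            (fun e => T (src e)
              (if α e = 0 then 0 else q ^ ⌊(j : ℝ) + Real.logb q (α e)⌋) + (w e : EReal))})
    (v : Fin n) (j : ℤ) (hj : (v.val : ℤ) + 1 ≤ j) :
    tau src dst w ⟨0, hn⟩ v (q ^ (j - ((v.val : ℤ) + 1))) ≤ T v (q ^ j) ∧
      T v (q ^ j) ≤ tau src dst w ⟨0, hn⟩ v (q ^ j) := by
  clear hj
  have hq0 : (0:ℝ) < q := lt_trans one_pos hq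
  have hzr : ∀ k : ℤ, (q : ℝ) ^ k = q ^ (k : ℝ) := fun k => (Real.rpow_intCast q k).symm
  have hzpos : ∀ k : ℤ, (0:ℝ) < q ^ k := fun k => zpow_pos hq0 k
  have main : ∀ (k : ℕ) (v : Fin n), v.val < k → ∀ j : ℤ,
      tau src dst w ⟨0, hn⟩ v (q ^ (j - ((v.val : ℤ) + 1))) ≤ T v (q ^ j) ∧
        T v (q ^ j) ≤ tau src dst w ⟨0, hn⟩ v (q ^ j) := by
    intro k
    induction k with
    | zero => exact fun v h => absurd h (Nat.not_lt_zero _)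
    | succ k ih =>
      intro v hvk j
      by_cases hv : v = ⟨0, hn⟩
      · -- base case : v is the source
        subst hv
        simp only [Nat.cast_zero, zero_add]
        rcases le_or_gt j 0 with hj0 | hj0
        · have hTv : T ⟨0, hn⟩ (q ^ j) = 0 := hTs1 _ (hzpos j) (zpow_le_one_of_nonpos₀ hq.le hj0)
          rw [hTv]
          constructor
          · have h1 : (q:ℝ) ^ (j - 1) ≤ (Ncnt src dst w ⟨0, hn⟩ ⟨0, hn⟩ (0:ℝ) : ℝ) := by
              rw [Ncnt_source src dst w htopo hn]
              simp only [le_refl, if_true]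
              exact_mod_cast zpow_le_one_of_nonpos₀ hq.le (by omega)
            simpa using tau_le_of src dst w _ _ h1
          · rw [tau_eq]
            apply le_sInf
            rintro x ⟨L, rfl, hC⟩
            rw [Ncnt_source src dst w htopo hn] at hC
            split_ifs at hC with h0L
            · exact_mod_cast h0L
            · exfalso; push_cast at hC; linarith [hzpos j]
        · have hone : (1:ℝ) < q ^ j := by
            rw [hzr]
            exact (Real.one_lt_rpow_iff_of_pos hq0).mpr (Or.inl ⟨hq, by exact_mod_cast hj0⟩)
          have hTv : T ⟨0, hn⟩ (q ^ j) = ⊤ := hTs2 _ hone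
          rw [hTv]
          refine ⟨le_top, ?_⟩
          rw [tau_eq]
          apply le_sInf
          rintro x ⟨L, rfl, hC⟩
          exfalso
          rw [Ncnt_source src dst w htopo hn] at hC
          split_ifs at hC <;> push_cast at hC <;> linarith
      · -- inductive case : v is not the source
        have hsv : (⟨0, hn⟩ : Fin n) ≠ v := fun h => hv h.symm
        have hsrc : ∀ e, dst e = v → (src e).val < k := by
          intro e he
          have h1 : (src e).val < v.val := by
            have := htopo e; rw [he] at this; exact this
          omega
        rw [hTrec v hv j]
        constructor
        · -- lower bound
          apply le_sInf
          rintro x ⟨α, hα0, hα1, hxeq⟩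
          obtain ⟨e1, he1D, he1⟩ : ∃ e ∈ Finset.univ.filter (fun e => dst e = v), α e ≠ 0 := by
            by_contra h
            push_neg at h
            rw [Finset.sum_eq_zero h] at hα1
            norm_num at hα1
          rcases eq_top_or_lt_top x with hXtop | hXlt
          · rw [hXtop]; exact le_top
          have hXbot : x ≠ ⊥ := by
            intro hbot
            have hterm : T (src e1) (if α e1 = 0 then 0
                else q ^ ⌊(j:ℝ) + Real.logb q (α e1)⌋) + (w e1 : EReal) ≤ x :=
              le_trans (Finset.le_sup (f := fun e => T (src e)
                (if α e = 0 then 0 else q ^ ⌊(j:ℝ) + Real.logb q (α e)⌋) + (w e : EReal))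
                he1D) hxeq.ge
            rw [hbot, le_bot_iff, if_neg he1] at hterm
            rcases EReal.add_eq_bot_iff.mp hterm with hb | hb
            · have hIH := (ih (src e1) (hsrc e1 (by simpa using he1D))
                ⌊(j:ℝ) + Real.logb q (α e1)⌋).1
              rw [hb, le_bot_iff] at hIH
              exact tau_ne_bot src dst w htopo _ _ (hzpos _) hIH
            · exact EReal.coe_ne_bot _ hb
          lift x to ℝ using ⟨hXlt.ne, hXbot⟩
          have hterm : ∀ e ∈ Finset.univ.filter (fun e => dst e = v),
              α e * q ^ (j - ((v.val : ℤ) + 1))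
                ≤ (Ncnt src dst w ⟨0, hn⟩ (src e) (x - w e) : ℝ) := by
            intro e heD
            have hev : dst e = v := by simpa using heD
            by_cases hαe : α e = 0
            · rw [hαe, zero_mul]; positivity
            · have hαpos : 0 < α e := lt_of_le_of_ne (hα0 e hev) (Ne.symm hαe)
              have hsup : T (src e) (q ^ ⌊(j:ℝ) + Real.logb q (α e)⌋) + (w e : EReal)
                  ≤ (x : EReal) := by
                have h5 := le_trans (Finset.le_sup (f := fun e => T (src e)
                  (if α e = 0 then 0 else q ^ ⌊(j:ℝ) + Real.logb q (α e)⌋) + (w e : EReal))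
                  heD) hxeq.ge
                simpa only [if_neg hαe] using h5
              have hT' : T (src e) (q ^ ⌊(j:ℝ) + Real.logb q (α e)⌋)
                  ≤ ((x - w e : ℝ) : EReal) := by
                rw [EReal.coe_sub]
                exact (EReal.le_sub_iff_add_le (Or.inl (EReal.coe_ne_bot _))
                  (Or.inl (EReal.coe_ne_top _))).mpr hsup
              have hIH := (ih (src e) (hsrc e hev) ⌊(j:ℝ) + Real.logb q (α e)⌋).1
              have hN := le_Ncnt_of_tau_le src dst w htopo _ _ (le_trans hIH hT')
              refine le_trans ?_ hN
              rw [hzr, hzr]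
              have hfl : (j:ℝ) + Real.logb q (α e) - 1
                  < (⌊(j:ℝ) + Real.logb q (α e)⌋ : ℝ) := Int.sub_one_lt_floor _
              have hlt : ((src e).val : ℝ) + 1 ≤ (v.val : ℝ) := by
                have h1 : (src e).val < v.val := by
                  have := htopo e; rw [hev] at this; exact this
                exact_mod_cast h1
              calc α e * q ^ ((j - ((v.val : ℤ) + 1) : ℤ) : ℝ)
                  = q ^ (Real.logb q (α e) + ((j - ((v.val : ℤ) + 1) : ℤ) : ℝ)) := by
                    rw [Real.rpow_add hq0, Real.rpow_logb hq0 hq.ne' hαpos]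
                _ ≤ q ^ ((( ⌊(j:ℝ) + Real.logb q (α e)⌋ - (((src e).val : ℤ) + 1) : ℤ)) : ℝ) := by
                    apply (Real.rpow_le_rpow_left_iff hq).mpr
                    push_cast
                    linarith
          have hbound : (q:ℝ) ^ (j - ((v.val : ℤ) + 1))
              ≤ (Ncnt src dst w ⟨0, hn⟩ v x : ℝ) := by
            rw [Ncnt_rec src dst w htopo _ v hsv x]
            push_cast
            calc (q:ℝ) ^ (j - ((v.val : ℤ) + 1))
                = ∑ e ∈ Finset.univ.filter (fun e => dst e = v),
                    α e * q ^ (j - ((v.val : ℤ) + 1)) := by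
                  rw [← Finset.sum_mul, hα1, one_mul]
              _ ≤ _ := Finset.sum_le_sum hterm
          exact tau_le_of src dst w _ _ hbound
        · -- upper bound
          rw [tau_eq]
          apply le_sInf
          rintro x ⟨L, rfl, hC⟩
          have hNpos : (0:ℝ) < (Ncnt src dst w ⟨0, hn⟩ v L : ℝ) :=
            lt_of_lt_of_le (hzpos j) hC
          set α : E → ℝ := fun e => if dst e = v then
            (Ncnt src dst w ⟨0, hn⟩ (src e) (L - w e) : ℝ)
              / (Ncnt src dst w ⟨0, hn⟩ v L : ℝ) else 0 with hα
          have hα0 : ∀ e, dst e = v → 0 ≤ α e := by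
            intro e he
            rw [hα]; simp only; rw [if_pos he]; positivity
          have hα1 : ∑ e ∈ Finset.univ.filter (fun e => dst e = v), α e = 1 := by
            have h1 : ∀ e ∈ Finset.univ.filter (fun e => dst e = v),
                α e = (Ncnt src dst w ⟨0, hn⟩ (src e) (L - w e) : ℝ)
                  / (Ncnt src dst w ⟨0, hn⟩ v L : ℝ) := by
              intro e he
              rw [hα]; simp only; rw [if_pos (by simpa using he)]
            rw [Finset.sum_congr rfl h1, ← Finset.sum_div, div_eq_one_iff_eq hNpos.ne']
            rw [Ncnt_rec src dst w htopo _ v hsv L]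
            push_cast
            rfl
          refine le_trans (sInf_le ⟨α, hα0, hα1, rfl⟩) ?_
          apply Finset.sup_le
          intro e heD
          have hev : dst e = v := by simpa using heD
          by_cases hαe : α e = 0
          · rw [if_pos hαe, hT0, EReal.bot_add]; exact bot_le
          · rw [if_neg hαe]
            have hαpos : 0 < α e := lt_of_le_of_ne (hα0 e hev) (Ne.symm hαe)
            have hkey : (q:ℝ) ^ ⌊(j:ℝ) + Real.logb q (α e)⌋
                ≤ (Ncnt src dst w ⟨0, hn⟩ (src e) (L - w e) : ℝ) := by
              have h2 : (q:ℝ) ^ ⌊(j:ℝ) + Real.logb q (α e)⌋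
                  ≤ q ^ ((j:ℝ) + Real.logb q (α e)) := by
                rw [hzr]
                exact (Real.rpow_le_rpow_left_iff hq).mpr (Int.floor_le _)
              have h3 : (q:ℝ) ^ ((j:ℝ) + Real.logb q (α e)) = q ^ (j:ℤ) * α e := by
                rw [Real.rpow_add hq0, Real.rpow_logb hq0 hq.ne' hαpos, hzr]
              have h4 : (q:ℝ) ^ (j:ℤ) * α e
                  ≤ (Ncnt src dst w ⟨0, hn⟩ (src e) (L - w e) : ℝ) := by
                rw [hα]; simp only; rw [if_pos hev]
                calc (q:ℝ) ^ (j:ℤ) * ((Ncnt src dst w ⟨0, hn⟩ (src e) (L - w e) : ℝ)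
                      / (Ncnt src dst w ⟨0, hn⟩ v L : ℝ))
                    = (Ncnt src dst w ⟨0, hn⟩ (src e) (L - w e) : ℝ)
                      * ((q:ℝ) ^ (j:ℤ) / (Ncnt src dst w ⟨0, hn⟩ v L : ℝ)) := by ring
                  _ ≤ (Ncnt src dst w ⟨0, hn⟩ (src e) (L - w e) : ℝ) * 1 := by
                      apply mul_le_mul_of_nonneg_left _ (Nat.cast_nonneg _)
                      exact (div_le_one hNpos).mpr hC
                  _ = _ := mul_one _
              linarith
            have hIH := (ih (src e) (hsrc e hev) ⌊(j:ℝ) + Real.logb q (α e)⌋).2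
            have htau := le_trans hIH (tau_le_of src dst w _ _ hkey)
            calc T (src e) (q ^ ⌊(j:ℝ) + Real.logb q (α e)⌋) + (w e : EReal)
                ≤ ((L - w e : ℝ) : EReal) + (w e : EReal) := add_le_add htau le_rfl
              _ = (L : EReal) := by rw [← EReal.coe_add]; norm_num
  exact main (v.val + 1) v (Nat.lt_succ_self _) j
end

section
/- Let 1 ≤ i ≤ n and let j, k be integers with j ≥ i and k ≥ i. Then τ₂(v_i, q^{j−i}, r^k) ≤ τ₂′(v_i, q^j, r^k) ≤ τ₂(v_i, q^j, r^{k−i}) (as elements of ℝ ∪ {−∞,+∞}). -/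
open scoped BigOperators

/-- `tau2 src dst l l' s v a B` : the smallest threshold `L₂ ∈ ℝ` (as an element of
`ℝ ∪ {−∞, +∞}`) such that at least `a` directed `s`–`v` paths have `l`-weight at most `B`
and `l'`-weight at most `L₂`; it is `−∞` when `a ≤ 0` and `+∞` when fewer than `a`
`s`–`v` paths of `l`-weight at most `B` exist. -/
noncomputable def tau2 {V E : Type} (src dst : E → V) (l l' : E → ℝ) (s v : V)
    (a B : ℝ) : EReal :=
  sInf {x : EReal | ∃ L₂ : ℝ, x = (L₂ : EReal) ∧
    a ≤ (Nat.card {p : List E // IsWalk src dst s v p ∧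
      (p.map l).sum ≤ B ∧ (p.map l').sum ≤ L₂} : ℝ)}

namespace Stmt2Aux

variable {n : ℕ} {E : Type} [Fintype E]

lemma isWalk_le {src dst : E → Fin n} (htopo : ∀ e, src e < dst e) :
    ∀ (p : List E) (u v : Fin n), IsWalk src dst u v p → u.val + p.length ≤ v.val := by
  intro p
  induction p with
  | nil =>
    intro u v h
    have : u = v := h
    simp [this]
  | cons e p ih =>
    intro u v h
    obtain ⟨he, hw⟩ := h
    have h1 := ih (dst e) v hw
    have h2 : (src e).val < (dst e).val := htopo e
    rw [he] at h2
    simp only [List.length_cons]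
    omega

lemma isWalk_self {src dst : E → Fin n} (htopo : ∀ e, src e < dst e)
    {u : Fin n} {p : List E} (h : IsWalk src dst u u p) : p = [] := by
  have := isWalk_le htopo p u u h
  cases p with
  | nil => rfl
  | cons e q => simp at this

lemma walk_finite (src dst : E → Fin n) (htopo : ∀ e, src e < dst e) (u v : Fin n) :
    {p : List E | IsWalk src dst u v p}.Finite := by
  apply (List.finite_length_le E n).subset
  intro p hp
  have := isWalk_le htopo p u v hp
  have := v.isLt
  simp only [Set.mem_setOf_eq]
  omega

lemma isWalk_concat (src dst : E → Fin n) (e : E) :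
    ∀ (p : List E) (u v : Fin n),
      IsWalk src dst u v (p ++ [e]) ↔ IsWalk src dst u (src e) p ∧ dst e = v := by
  intro p
  induction p with
  | nil =>
    intro u v
    constructor
    · rintro ⟨h1, h2⟩
      exact ⟨h1.symm, h2⟩
    · rintro ⟨h1, h2⟩
      exact ⟨h1.symm, h2⟩
  | cons f p ih =>
    intro u v
    constructor
    · rintro ⟨h1, h2⟩
      have h2' := (ih (dst f) v).1 h2
      exact ⟨⟨h1, h2'.1⟩, h2'.2⟩
    · rintro ⟨⟨h1, h2⟩, h3⟩
      exact ⟨h1, (ih _ _).2 ⟨h2, h3⟩⟩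

noncomputable def cnt (src dst : E → Fin n) (l l' : E → ℝ) (s v : Fin n) (B L : ℝ) : ℕ :=
  {p : List E | IsWalk src dst s v p ∧ (p.map l).sum ≤ B ∧ (p.map l').sum ≤ L}.ncard

lemma tau2_eq (src dst : E → Fin n) (l l' : E → ℝ) (s v : Fin n) (a B : ℝ) :
    tau2 src dst l l' s v a B =
      sInf {x : EReal | ∃ L₂ : ℝ, x = (L₂ : EReal) ∧
        a ≤ (cnt src dst l l' s v B L₂ : ℝ)} := rfl

lemma cnt_set_finite (src dst : E → Fin n) (l l' : E → ℝ) (htopo : ∀ e, src e < dst e)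
    (s v : Fin n) (B L : ℝ) :
    {p : List E | IsWalk src dst s v p ∧ (p.map l).sum ≤ B ∧ (p.map l').sum ≤ L}.Finite :=
  (walk_finite src dst htopo s v).subset (fun _ hp => hp.1)

lemma cnt_mono (src dst : E → Fin n) (l l' : E → ℝ) (htopo : ∀ e, src e < dst e)
    (s v : Fin n) {B B' L L' : ℝ} (hB : B ≤ B') (hL : L ≤ L') :
    cnt src dst l l' s v B L ≤ cnt src dst l l' s v B' L' :=
  Set.ncard_le_ncard (fun p hp => ⟨hp.1, hp.2.1.trans hB, hp.2.2.trans hL⟩)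
    (cnt_set_finite src dst l l' htopo s v B' L')

lemma cnt_self (src dst : E → Fin n) (l l' : E → ℝ) (htopo : ∀ e, src e < dst e)
    (s : Fin n) (B L : ℝ) :
    cnt src dst l l' s s B L = if 0 ≤ B ∧ 0 ≤ L then 1 else 0 := by
  unfold cnt
  by_cases h : 0 ≤ B ∧ 0 ≤ L
  · rw [if_pos h]
    have : {p : List E | IsWalk src dst s s p ∧ (p.map l).sum ≤ B ∧ (p.map l').sum ≤ L}
        = {[]} := by
      ext p
      simp only [Set.mem_setOf_eq, Set.mem_singleton_iff]
      constructor
      · rintro ⟨hw, -, -⟩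
        exact isWalk_self htopo hw
      · rintro rfl
        exact ⟨rfl, by simpa using h.1, by simpa using h.2⟩
    rw [this, Set.ncard_singleton]
  · rw [if_neg h]
    have : {p : List E | IsWalk src dst s s p ∧ (p.map l).sum ≤ B ∧ (p.map l').sum ≤ L}
        = ∅ := by
      ext p
      simp only [Set.mem_setOf_eq, Set.mem_empty_iff_false, iff_false]
      rintro ⟨hw, h1, h2⟩
      have := isWalk_self htopo hw
      subst this
      simp at h1 h2
      exact h ⟨h1, h2⟩
    rw [this, Set.ncard_empty]

lemma cnt_self_le_one (src dst : E → Fin n) (l l' : E → ℝ) (htopo : ∀ e, src e < dst e)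
    (s : Fin n) (B L : ℝ) : cnt src dst l l' s s B L ≤ 1 := by
  rw [cnt_self src dst l l' htopo]
  split <;> omega

lemma cnt_nonneg_budget (src dst : E → Fin n) (l l' : E → ℝ) (hl : ∀ e, 0 ≤ l e)
    (s v : Fin n) {B L : ℝ} (h : cnt src dst l l' s v B L ≠ 0) : 0 ≤ B := by
  obtain ⟨p, -, h1, -⟩ := Set.nonempty_of_ncard_ne_zero h
  refine le_trans ?_ h1
  apply List.sum_nonneg
  intro x hx
  obtain ⟨e, -, rfl⟩ := List.mem_map.1 hx
  exact hl e


lemma cnt_decomp (src dst : E → Fin n) (l l' : E → ℝ) (htopo : ∀ e, src e < dst e)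
    (s v : Fin n) (hv : v ≠ s) (B L : ℝ) :
    cnt src dst l l' s v B L
      = ∑ e ∈ Finset.univ.filter (fun e => dst e = v),
          cnt src dst l l' s (src e) (B - l e) (L - l' e) := by
  classical
  set F := Finset.univ.filter (fun e => dst e = v) with hF
  have hfin : ∀ (w : Fin n) (B' L' : ℝ),
      {p : List E | IsWalk src dst s w p ∧ (p.map l).sum ≤ B' ∧ (p.map l').sum ≤ L'}.Finite :=
    fun w B' L' => cnt_set_finite src dst l l' htopo s w B' L'
  have key : {p : List E | IsWalk src dst s v p ∧ (p.map l).sum ≤ B ∧ (p.map l').sum ≤ L}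
      = ↑(F.biUnion (fun e =>
          ((hfin (src e) (B - l e) (L - l' e)).toFinset).image (· ++ [e]))) := by
    ext p
    simp only [Finset.coe_biUnion, Set.mem_iUnion, Finset.mem_coe, Finset.mem_image,
      Set.Finite.mem_toFinset, Set.mem_setOf_eq, hF, Finset.mem_filter, Finset.mem_univ,
      true_and]
    constructor
    · rintro ⟨hw, h1, h2⟩
      rcases p.eq_nil_or_concat' with rfl | ⟨p', e, rfl⟩
      · exact absurd ((show ((s:Fin n) = v) from hw).symm) hv
      · rw [isWalk_concat] at hw
        simp only [List.map_append, List.sum_append, List.map_cons, List.map_nil,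
          List.sum_cons, List.sum_nil, add_zero] at h1 h2
        exact ⟨e, hw.2, p', ⟨hw.1, by linarith, by linarith⟩, rfl⟩
    · rintro ⟨e, he, p', ⟨hw, h1, h2⟩, rfl⟩
      refine ⟨(isWalk_concat src dst e p' s v).2 ⟨hw, he⟩, ?_, ?_⟩ <;>
        simp only [List.map_append, List.sum_append, List.map_cons, List.map_nil,
          List.sum_cons, List.sum_nil, add_zero] <;> linarith
  rw [cnt, key, Set.ncard_coe_finset, Finset.card_biUnion]
  · refine Finset.sum_congr rfl (fun e _ => ?_)
    rw [Finset.card_image_of_injective _ (fun a b h => by simpa using h)]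
    rw [cnt, Set.ncard_eq_toFinset_card _ (hfin (src e) (B - l e) (L - l' e))]
  · intro e he e' he' hne
    rw [Function.onFun, Finset.disjoint_left]
    rintro a ha ha'
    simp only [Finset.mem_image, Set.Finite.mem_toFinset] at ha ha'
    obtain ⟨p1, -, rfl⟩ := ha
    obtain ⟨p2, -, hcon⟩ := ha'
    rw [← List.concat_eq_append, ← List.concat_eq_append] at hcon
    exact hne ((List.concat_inj.1 hcon).2.symm)

lemma tau2_le_of_cnt (src dst : E → Fin n) (l l' : E → ℝ) (s v : Fin n) {a B L : ℝ}
    (h : a ≤ (cnt src dst l l' s v B L : ℝ)) :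
    tau2 src dst l l' s v a B ≤ (L : EReal) := by
  rw [tau2_eq]
  exact sInf_le ⟨L, rfl, h⟩

lemma cnt_of_tau2_le (src dst : E → Fin n) (l l' : E → ℝ) (htopo : ∀ e, src e < dst e)
    (s v : Fin n) {a B c : ℝ}
    (h : tau2 src dst l l' s v a B ≤ (c : EReal)) :
    a ≤ (cnt src dst l l' s v B c : ℝ) := by
  obtain ⟨ε, hε, hsub⟩ : ∃ ε > 0, ∀ p : List E, IsWalk src dst s v p → (p.map l).sum ≤ B →
      (p.map l').sum ≤ c + ε → (p.map l').sum ≤ c := by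
    set P := {p : List E | IsWalk src dst s v p ∧ (p.map l).sum ≤ B ∧ c < (p.map l').sum}
      with hP
    have hPfin : P.Finite := (walk_finite src dst htopo s v).subset (fun _ hp => hp.1)
    by_cases hne : P.Nonempty
    · obtain ⟨p₀, hp₀, hmin⟩ := Set.exists_min_image P (fun p => (p.map l').sum) hPfin hne
      refine ⟨((p₀.map l').sum - c)/2, by linarith [hp₀.2.2], ?_⟩
      intro p hw h1 h2
      by_contra hgt
      push_neg at hgt
      have := hmin p ⟨hw, h1, hgt⟩
      linarith [hp₀.2.2]
    · refine ⟨1, one_pos, ?_⟩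
      intro p hw h1 _
      by_contra hgt
      push_neg at hgt
      exact hne ⟨p, hw, h1, hgt⟩
  rw [tau2_eq] at h
  have hlt : sInf {x : EReal | ∃ L₂ : ℝ, x = (L₂ : EReal) ∧
      a ≤ (cnt src dst l l' s v B L₂ : ℝ)} < ((c + ε : ℝ) : EReal) :=
    h.trans_lt (EReal.coe_lt_coe_iff.2 (by linarith))
  obtain ⟨x, hx, hxlt⟩ := sInf_lt_iff.1 hlt
  obtain ⟨L₂, rfl, hcard⟩ := hx
  have hL₂ : L₂ ≤ c + ε := (EReal.coe_le_coe_iff.1 hxlt.le)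
  refine hcard.trans ?_
  have : cnt src dst l l' s v B L₂ ≤ cnt src dst l l' s v B c := by
    apply Set.ncard_le_ncard _ (cnt_set_finite src dst l l' htopo s v B c)
    rintro p ⟨hw, h1, h2⟩
    exact ⟨hw, h1, hsub p hw h1 (h2.trans hL₂)⟩
  exact_mod_cast this

lemma ereal_le_of_forall {x y : EReal} (h : ∀ c : ℝ, y ≤ (c : EReal) → x ≤ (c : EReal)) :
    x ≤ y := by
  induction y using EReal.rec with
  | top => exact le_top
  | coe b => exact h b le_rfl
  | bot =>
    induction x using EReal.rec with
    | bot => exact le_rfl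
    | coe a =>
      have := EReal.coe_le_coe_iff.1 (h (a - 1) bot_le)
      linarith
    | top => simpa using h 0 bot_le

lemma ereal_add_le_sub {x : EReal} {c d : ℝ} (h : x + (c : EReal) ≤ (d : EReal)) :
    x ≤ ((d - c : ℝ) : EReal) := by
  induction x using EReal.rec with
  | bot => exact bot_le
  | top => simp at h
  | coe a =>
    rw [← EReal.coe_add] at h
    rw [EReal.coe_le_coe_iff] at h ⊢
    linarith


lemma floor_logb_bounds {q : ℝ} (hq : 1 < q) (j : ℤ) {α : ℝ} (hα : 0 < α) :
    q ^ (j - 1) * α ≤ q ^ ⌊(j : ℝ) + Real.logb q α⌋ ∧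
      q ^ ⌊(j : ℝ) + Real.logb q α⌋ ≤ q ^ j * α := by
  have hq0 : (0:ℝ) < q := lt_trans one_pos hq
  have key : ∀ m : ℤ, q ^ ((m : ℝ) + Real.logb q α) = q ^ m * α := by
    intro m
    rw [Real.rpow_add hq0, Real.rpow_intCast, Real.rpow_logb hq0 (ne_of_gt hq) hα]
  constructor
  · calc q ^ (j - 1) * α = q ^ (((j - 1 : ℤ) : ℝ) + Real.logb q α) := (key (j - 1)).symm
      _ ≤ q ^ ((⌊(j : ℝ) + Real.logb q α⌋ : ℝ)) := by
          apply (Real.rpow_le_rpow_left_iff hq).2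
          have := Int.lt_floor_add_one ((j : ℝ) + Real.logb q α)
          push_cast
          linarith
      _ = q ^ ⌊(j : ℝ) + Real.logb q α⌋ := Real.rpow_intCast _ _
  · calc q ^ ⌊(j : ℝ) + Real.logb q α⌋ = q ^ ((⌊(j : ℝ) + Real.logb q α⌋ : ℝ)) :=
          (Real.rpow_intCast _ _).symm
      _ ≤ q ^ ((j : ℝ) + Real.logb q α) := by
          apply (Real.rpow_le_rpow_left_iff hq).2
          exact Int.floor_le _
      _ = q ^ j * α := key j

lemma floor_logb_bounds' {r : ℝ} (hr : 1 < r) {y : ℝ} (hy : 0 < y) :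
    r ^ ⌊Real.logb r y⌋ ≤ y ∧ y ≤ r ^ (⌊Real.logb r y⌋ + 1) := by
  have hr0 : (0:ℝ) < r := lt_trans one_pos hr
  have key : r ^ Real.logb r y = y := Real.rpow_logb hr0 (ne_of_gt hr) hy
  constructor
  · calc r ^ ⌊Real.logb r y⌋ = r ^ ((⌊Real.logb r y⌋ : ℝ)) := (Real.rpow_intCast _ _).symm
      _ ≤ r ^ Real.logb r y := by
          apply (Real.rpow_le_rpow_left_iff hr).2
          exact Int.floor_le _
      _ = y := key
  · calc y = r ^ Real.logb r y := key.symm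
      _ ≤ r ^ ((⌊Real.logb r y⌋ + 1 : ℤ) : ℝ) := by
          apply (Real.rpow_le_rpow_left_iff hr).2
          have := Int.lt_floor_add_one (Real.logb r y)
          push_cast
          linarith
      _ = r ^ (⌊Real.logb r y⌋ + 1) := Real.rpow_intCast _ _

end Stmt2Aux


open Stmt2Aux in
theorem stmt2
    {n : ℕ} (hn : 0 < n) {E : Type} [Fintype E]
    (src dst : E → Fin n) (l l' : E → ℝ)
    (htopo : ∀ e, src e < dst e)
    (hin : ∀ v : Fin n, v ≠ ⟨0, hn⟩ → ∃ e, dst e = v)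
    (hlnonneg : ∀ e, 0 ≤ l e)
    (q r : ℝ) (hq : 1 < q) (hr : 1 < r)
    (T2 : Fin n → ℝ → ℝ → EReal)
    (hT0 : ∀ v : Fin n, ∀ x : ℝ, T2 v 0 x = ⊥)
    (hTs1 : ∀ a x : ℝ, 0 < a → a ≤ 1 → 0 < x → T2 ⟨0, hn⟩ a x = 0)
    (hTs2 : ∀ a x : ℝ, 1 < a → 0 < x → T2 ⟨0, hn⟩ a x = ⊤)
    (hTrec : ∀ v : Fin n, v ≠ ⟨0, hn⟩ → ∀ j k : ℤ,
      T2 v (q ^ j) (r ^ k) = sInf {x : EReal |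
        ∃ α : E → ℝ, (∀ e, dst e = v → 0 ≤ α e) ∧
          (∑ e ∈ Finset.univ.filter (fun e => dst e = v), α e) = 1 ∧
          x = (Finset.univ.filter (fun e => dst e = v)).sup
            (fun e =>
              if α e = 0 then (⊥ : EReal)
              else if r ^ k - l e ≤ 0 then (⊤ : EReal)
              else T2 (src e) (q ^ ⌊(j : ℝ) + Real.logb q (α e)⌋)
                (r ^ ⌊Real.logb r (r ^ k - l e)⌋) + (l' e : EReal))})
    (v : Fin n) (j k : ℤ)
    (hj : (v.val : ℤ) + 1 ≤ j) (hk : (v.val : ℤ) + 1 ≤ k) :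
    tau2 src dst l l' ⟨0, hn⟩ v (q ^ (j - ((v.val : ℤ) + 1))) (r ^ k) ≤ T2 v (q ^ j) (r ^ k) ∧
      T2 v (q ^ j) (r ^ k) ≤ tau2 src dst l l' ⟨0, hn⟩ v (q ^ j) (r ^ (k - ((v.val : ℤ) + 1))) := by
  have hq0 : (0:ℝ) < q := lt_trans one_pos hq
  have hr0 : (0:ℝ) < r := lt_trans one_pos hr
  clear hj hk
  suffices H : ∀ m : ℕ, ∀ v : Fin n, v.val < m → ∀ j k : ℤ,
      tau2 src dst l l' ⟨0, hn⟩ v (q ^ (j - ((v.val : ℤ) + 1))) (r ^ k) ≤ T2 v (q ^ j) (r ^ k) ∧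
      T2 v (q ^ j) (r ^ k) ≤ tau2 src dst l l' ⟨0, hn⟩ v (q ^ j) (r ^ (k - ((v.val : ℤ) + 1))) by
    exact H (v.val + 1) v (Nat.lt_succ_self _) j k
  intro m
  induction m with
  | zero => exact fun v hv => absurd hv (Nat.not_lt_zero _)
  | succ m IH =>
    intro v hv j k
    by_cases hv0 : v = ⟨0, hn⟩
    · subst hv0
      simp only [Fin.val_mk, Nat.cast_zero, zero_add] at *
      by_cases hj0 : j ≤ 0
      · have hT : T2 ⟨0, hn⟩ (q ^ j) (r ^ k) = 0 :=
          hTs1 _ _ (zpow_pos hq0 j) (by simpa using zpow_le_zpow_right₀ hq.le hj0)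
            (zpow_pos hr0 k)
        rw [hT]
        constructor
        · show tau2 src dst l l' ⟨0, hn⟩ ⟨0, hn⟩ (q ^ (j - 1)) (r ^ k) ≤ ((0:ℝ) : EReal)
          apply tau2_le_of_cnt
          rw [cnt_self src dst l l' htopo, if_pos ⟨(zpow_pos hr0 k).le, le_rfl⟩]
          push_cast
          simpa using zpow_le_zpow_right₀ hq.le (show j - 1 ≤ 0 by omega)
        · rw [tau2_eq]
          apply le_sInf
          rintro x ⟨L₂, rfl, hc⟩
          show ((0:ℝ) : EReal) ≤ (L₂ : EReal)
          rw [EReal.coe_le_coe_iff]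
          by_contra hneg
          push_neg at hneg
          rw [cnt_self src dst l l' htopo, if_neg (fun h => absurd h.2 (not_le.2 hneg))] at hc
          push_cast at hc
          linarith [zpow_pos hq0 j]
      · push_neg at hj0
        have hT : T2 ⟨0, hn⟩ (q ^ j) (r ^ k) = ⊤ :=
          hTs2 _ _ (one_lt_zpow₀ hq (by omega)) (zpow_pos hr0 k)
        rw [hT]
        refine ⟨le_top, ?_⟩
        rw [tau2_eq]
        apply le_sInf
        rintro x ⟨L₂, rfl, hc⟩
        exfalso
        have h1 := cnt_self_le_one src dst l l' htopo ⟨0, hn⟩ (r ^ (k - 1)) L₂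
        have h2 : (1:ℝ) < q ^ j := one_lt_zpow₀ hq (by omega)
        have h3 : ((cnt src dst l l' ⟨0, hn⟩ ⟨0, hn⟩ (r ^ (k - 1)) L₂ : ℕ) : ℝ) ≤ 1 := by
          exact_mod_cast h1
        linarith
    · rw [hTrec v hv0 j k]
      have hIHe : ∀ e, dst e = v → (src e).val < m := by
        intro e he
        have h1 : (src e).val < (dst e).val := htopo e
        rw [he] at h1
        omega
      have hlt' : ∀ e, dst e = v → ((src e).val : ℤ) < (v.val : ℤ) := by
        intro e he
        have h1 : (src e).val < (dst e).val := htopo e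
        rw [he] at h1
        exact_mod_cast h1
      constructor
      · -- lower bound
        apply le_sInf
        rintro x ⟨α, hα0, hα1, rfl⟩
        apply ereal_le_of_forall
        intro L hL
        apply tau2_le_of_cnt
        have hdec := cnt_decomp src dst l l' htopo ⟨0, hn⟩ v hv0 (r ^ k) L
        have key : ∀ e ∈ Finset.univ.filter (fun e => dst e = v),
            α e * q ^ (j - ((v.val : ℤ) + 1)) ≤
            (cnt src dst l l' ⟨0, hn⟩ (src e) (r ^ k - l e) (L - l' e) : ℝ) := by
          intro e he
          have hdst : dst e = v := (Finset.mem_filter.1 he).2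
          rcases eq_or_lt_of_le (hα0 e hdst) with hz | hαpos
          · rw [← hz, zero_mul]
            exact Nat.cast_nonneg _
          · have hterm := le_trans (Finset.le_sup he) hL
            rw [if_neg (ne_of_gt hαpos)] at hterm
            by_cases hrk : r ^ k - l e ≤ 0
            · rw [if_pos hrk] at hterm
              simp at hterm
            · rw [if_neg hrk] at hterm
              push_neg at hrk
              have hT2le := ereal_add_le_sub hterm
              have hIH1 := (IH (src e) (hIHe e hdst) ⌊(j : ℝ) + Real.logb q (α e)⌋
                  ⌊Real.logb r (r ^ k - l e)⌋).1
              have htau := le_trans hIH1 hT2le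
              have hcnt := cnt_of_tau2_le src dst l l' htopo ⟨0, hn⟩ (src e) htau
              have hky := (floor_logb_bounds' hr hrk).1
              have hmono : ((cnt src dst l l' ⟨0, hn⟩ (src e)
                    (r ^ ⌊Real.logb r (r ^ k - l e)⌋) (L - l' e) : ℕ) : ℝ) ≤
                  ((cnt src dst l l' ⟨0, hn⟩ (src e) (r ^ k - l e) (L - l' e) : ℕ) : ℝ) := by
                exact_mod_cast cnt_mono src dst l l' htopo ⟨0, hn⟩ (src e) hky le_rfl
              refine le_trans ?_ (le_trans hcnt hmono)
              have hfl := (floor_logb_bounds hq j hαpos).1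
              rw [show (q : ℝ) ^ (⌊(j : ℝ) + Real.logb q (α e)⌋ - (((src e).val : ℤ) + 1))
                  = q ^ ⌊(j : ℝ) + Real.logb q (α e)⌋ / q ^ (((src e).val : ℤ) + 1) from
                  zpow_sub₀ (ne_of_gt hq0) _ _, le_div_iff₀ (zpow_pos hq0 _)]
              calc α e * q ^ (j - ((v.val : ℤ) + 1)) * q ^ (((src e).val : ℤ) + 1)
                  = q ^ (j - ((v.val : ℤ) + 1)) * q ^ (((src e).val : ℤ) + 1) * α e := by
                    ring
                _ = q ^ (j - ((v.val : ℤ) + 1) + (((src e).val : ℤ) + 1)) * α e := by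
                    rw [← zpow_add₀ (ne_of_gt hq0)]
                _ ≤ q ^ (j - 1) * α e := by
                    apply mul_le_mul_of_nonneg_right _ hαpos.le
                    exact zpow_le_zpow_right₀ hq.le (by have := hlt' e hdst; omega)
                _ ≤ q ^ ⌊(j : ℝ) + Real.logb q (α e)⌋ := hfl
        calc (q ^ (j - ((v.val : ℤ) + 1)) : ℝ)
            = ∑ e ∈ Finset.univ.filter (fun e => dst e = v),
                α e * q ^ (j - ((v.val : ℤ) + 1)) := by
              rw [← Finset.sum_mul, hα1, one_mul]
          _ ≤ ∑ e ∈ Finset.univ.filter (fun e => dst e = v),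
                ((cnt src dst l l' ⟨0, hn⟩ (src e) (r ^ k - l e) (L - l' e) : ℕ) : ℝ) :=
              Finset.sum_le_sum key
          _ = ((∑ e ∈ Finset.univ.filter (fun e => dst e = v),
                cnt src dst l l' ⟨0, hn⟩ (src e) (r ^ k - l e) (L - l' e) : ℕ) : ℝ) := by
              push_cast
              rfl
          _ = ((cnt src dst l l' ⟨0, hn⟩ v (r ^ k) L : ℕ) : ℝ) := by rw [← hdec]
      · -- upper bound
        rw [tau2_eq]
        apply le_sInf
        rintro x ⟨L, rfl, hc⟩
        have hdec := cnt_decomp src dst l l' htopo ⟨0, hn⟩ v hv0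
          (r ^ (k - ((v.val : ℤ) + 1))) L
        have hNpos : (0 : ℝ) <
            ((cnt src dst l l' ⟨0, hn⟩ v (r ^ (k - ((v.val : ℤ) + 1))) L : ℕ) : ℝ) :=
          lt_of_lt_of_le (zpow_pos hq0 j) hc
        set Nv : ℝ := ((cnt src dst l l' ⟨0, hn⟩ v (r ^ (k - ((v.val : ℤ) + 1))) L : ℕ) : ℝ)
          with hNv
        set α : E → ℝ := fun e =>
          ((cnt src dst l l' ⟨0, hn⟩ (src e) (r ^ (k - ((v.val : ℤ) + 1)) - l e)
            (L - l' e) : ℕ) : ℝ) / Nv with hαdef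
        have hNsum : Nv = ∑ e ∈ Finset.univ.filter (fun e => dst e = v),
            ((cnt src dst l l' ⟨0, hn⟩ (src e) (r ^ (k - ((v.val : ℤ) + 1)) - l e)
              (L - l' e) : ℕ) : ℝ) := by
          rw [hNv, hdec]
          push_cast
          rfl
        have hsum : ∑ e ∈ Finset.univ.filter (fun e => dst e = v), α e = 1 := by
          simp only [hαdef]
          rw [← Finset.sum_div, ← hNsum]
          exact div_self (ne_of_gt hNpos)
        refine le_trans (sInf_le ⟨α, fun e _ => div_nonneg (Nat.cast_nonneg _) hNpos.le,
          hsum, rfl⟩) ?_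
        apply Finset.sup_le
        intro e he
        have hdst : dst e = v := (Finset.mem_filter.1 he).2
        by_cases hz : α e = 0
        · rw [if_pos hz]
          exact bot_le
        · rw [if_neg hz]
          have hNe0 : cnt src dst l l' ⟨0, hn⟩ (src e)
              (r ^ (k - ((v.val : ℤ) + 1)) - l e) (L - l' e) ≠ 0 := by
            intro h0
            apply hz
            simp only [hαdef, h0, Nat.cast_zero, zero_div]
          have hαpos : 0 < α e := by
            simp only [hαdef]
            exact div_pos (by exact_mod_cast Nat.pos_of_ne_zero hNe0) hNpos
          have hBle : 0 ≤ r ^ (k - ((v.val : ℤ) + 1)) - l e :=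
            cnt_nonneg_budget src dst l l' hlnonneg ⟨0, hn⟩ (src e) hNe0
          have hrk : 0 < r ^ k - l e := by
            have h5 : r ^ (k - ((v.val : ℤ) + 1)) < r ^ k :=
              zpow_lt_zpow_right₀ hr (by omega)
            linarith
          rw [if_neg (not_le.2 hrk)]
          have hIH2 := (IH (src e) (hIHe e hdst) ⌊(j : ℝ) + Real.logb q (α e)⌋
            ⌊Real.logb r (r ^ k - l e)⌋).2
          have htau2L : tau2 src dst l l' ⟨0, hn⟩ (src e)
              (q ^ ⌊(j : ℝ) + Real.logb q (α e)⌋)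
              (r ^ (⌊Real.logb r (r ^ k - l e)⌋ - (((src e).val : ℤ) + 1)))
              ≤ ((L - l' e : ℝ) : EReal) := by
            apply tau2_le_of_cnt
            have h1 : q ^ ⌊(j : ℝ) + Real.logb q (α e)⌋ ≤ q ^ j * α e :=
              (floor_logb_bounds hq j hαpos).2
            have h2 : q ^ j * α e ≤
                ((cnt src dst l l' ⟨0, hn⟩ (src e) (r ^ (k - ((v.val : ℤ) + 1)) - l e)
                  (L - l' e) : ℕ) : ℝ) := by
              simp only [hαdef]
              rw [mul_comm, div_mul_eq_mul_div, div_le_iff₀ hNpos]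
              exact mul_le_mul_of_nonneg_left hc (Nat.cast_nonneg _)
            have h3 : r ^ (k - ((v.val : ℤ) + 1)) - l e ≤
                r ^ (⌊Real.logb r (r ^ k - l e)⌋ - (((src e).val : ℤ) + 1)) := by
              have hy2 := (floor_logb_bounds' hr hrk).2
              have c1 : (r ^ k - l e) * r ^ (-(((src e).val : ℤ) + 2)) ≤
                  r ^ (⌊Real.logb r (r ^ k - l e)⌋ - (((src e).val : ℤ) + 1)) := by
                calc (r ^ k - l e) * r ^ (-(((src e).val : ℤ) + 2))
                    ≤ r ^ (⌊Real.logb r (r ^ k - l e)⌋ + 1) * r ^ (-(((src e).val : ℤ) + 2)) :=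
                      mul_le_mul_of_nonneg_right hy2 (zpow_pos hr0 _).le
                  _ = r ^ (⌊Real.logb r (r ^ k - l e)⌋ - (((src e).val : ℤ) + 1)) := by
                      rw [← zpow_add₀ (ne_of_gt hr0)]
                      congr 1
                      ring
              have c2 : (r ^ k - l e) * r ^ (-((v.val : ℤ) + 1)) ≤
                  (r ^ k - l e) * r ^ (-(((src e).val : ℤ) + 2)) :=
                mul_le_mul_of_nonneg_left
                  (zpow_le_zpow_right₀ hr.le (by have := hlt' e hdst; omega)) hrk.le
              have c3 : r ^ k * r ^ (-((v.val : ℤ) + 1)) = r ^ (k - ((v.val : ℤ) + 1)) := by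
                rw [← zpow_add₀ (ne_of_gt hr0), sub_eq_add_neg]
              have c4 : l e * r ^ (-((v.val : ℤ) + 1)) ≤ l e := by
                have h6 : r ^ (-((v.val : ℤ) + 1)) ≤ 1 := by
                  simpa using zpow_le_zpow_right₀ hr.le (show -((v.val : ℤ) + 1) ≤ 0 by omega)
                nlinarith [hlnonneg e, zpow_pos hr0 (-((v.val : ℤ) + 1))]
              have c5 : (r ^ k - l e) * r ^ (-((v.val : ℤ) + 1)) =
                  r ^ (k - ((v.val : ℤ) + 1)) - l e * r ^ (-((v.val : ℤ) + 1)) := by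
                rw [sub_mul, c3]
              linarith
            have h4 : ((cnt src dst l l' ⟨0, hn⟩ (src e)
                  (r ^ (k - ((v.val : ℤ) + 1)) - l e) (L - l' e) : ℕ) : ℝ) ≤
                ((cnt src dst l l' ⟨0, hn⟩ (src e)
                  (r ^ (⌊Real.logb r (r ^ k - l e)⌋ - (((src e).val : ℤ) + 1)))
                  (L - l' e) : ℕ) : ℝ) := by
              exact_mod_cast cnt_mono src dst l l' htopo ⟨0, hn⟩ (src e) h3 le_rfl
            linarith
          calc T2 (src e) (q ^ ⌊(j : ℝ) + Real.logb q (α e)⌋)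
                (r ^ ⌊Real.logb r (r ^ k - l e)⌋) + (l' e : EReal)
              ≤ ((L - l' e : ℝ) : EReal) + (l' e : EReal) :=
                add_le_add_left (le_trans hIH2 htau2L) _
            _ = (L : EReal) := by
                rw [← EReal.coe_add]
                norm_num
end

section
/- Let ε > 0, δ > 0, set q = (1+ε)^{1/n} and r = (1+δ)^{1/n}, let L₁ > 0 and L₂ be reals, and let K = ⌈log_r L₁⌉. Let k be an integer with k ≥ n such that τ₂′(v_n, q^k, r^K) ≤ L₂ < τ₂′(v_n, q^{k+1}, r^K), let a be the largest nonnegative integer such that τ₂(v_n, a, r^{K−n}) ≤ L₂, and let b be the largest nonnegative integer such that τ₂(v_n, b, r^K) ≤ L₂. Then a ≤ b, a/q^k ≤ 1+ε, and q^k/b ≤ 1+ε. -/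
open scoped BigOperators

/-- reversed walk predicate: edges listed from the end. -/
def RWalk {V E : Type} (src dst : E → V) : V → V → List E → Prop
  | v, u, [] => v = u
  | v, u, e :: p => dst e = v ∧ RWalk src dst (src e) u p

section walks

variable {n : ℕ} {E : Type} [Finite E] (src dst : E → Fin n)

theorem rwalk_append_single {u v : Fin n} {p : List E} {e : E} :
    RWalk src dst v u (p ++ [e]) ↔ (RWalk src dst v (dst e) p ∧ src e = u) := by
  induction p generalizing v with
  | nil => simp [RWalk]; tauto
  | cons f p ih => simp [RWalk, ih]; tauto

theorem isWalk_iff_rwalk_reverse {u v : Fin n} {p : List E} :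
    IsWalk src dst u v p ↔ RWalk src dst v u p.reverse := by
  induction p generalizing v u with
  | nil => simp [IsWalk, RWalk]; tauto
  | cons f p ih =>
    simp only [List.reverse_cons, IsWalk, rwalk_append_single, ih]
    tauto

theorem rwalk_length (htopo : ∀ e, src e < dst e) {u v : Fin n} {p : List E}
    (h : RWalk src dst v u p) : (u : ℕ) + p.length ≤ (v : ℕ) := by
  induction p generalizing v with
  | nil => cases h; simp
  | cons f p ih =>
    obtain ⟨h1, h2⟩ := h
    have h3 := ih h2
    have h4 : (src f : ℕ) < (dst f : ℕ) := htopo f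
    subst h1
    simp only [List.length_cons]
    omega

theorem rwalk_finite (htopo : ∀ e, src e < dst e) (u v : Fin n) (C : List E → Prop) :
    Finite {p : List E // RWalk src dst v u p ∧ C p} := by
  have : {p : List E | RWalk src dst v u p ∧ C p} ⊆ {p : List E | p.length ≤ n} := by
    rintro p ⟨h1, -⟩
    have := rwalk_length src dst htopo h1
    have := v.isLt
    simp only [Set.mem_setOf_eq]
    omega
  exact ((List.finite_length_le E n).subset this).to_subtype

theorem isWalk_finite (htopo : ∀ e, src e < dst e) (u v : Fin n) (C : List E → Prop) :
    Finite {p : List E // IsWalk src dst u v p ∧ C p} := by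
  have : Finite {p : List E // RWalk src dst v u p ∧ C p.reverse} :=
    rwalk_finite src dst htopo u v _
  refine Finite.of_injective (fun x => (⟨x.1.reverse, ?_, ?_⟩ :
    {p : List E // RWalk src dst v u p ∧ C p.reverse})) ?_
  · exact (isWalk_iff_rwalk_reverse src dst).1 x.2.1
  · simpa using x.2.2
  · intro x y hxy
    have : x.1.reverse = y.1.reverse := congrArg Subtype.val hxy
    exact Subtype.ext (by simpa using congrArg List.reverse this)

end walks

section np

variable {n : ℕ} {E : Type} [Fintype E] (src dst : E → Fin n) (l l' : E → ℝ)

/-- number of walks obeying the two weight bounds -/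
noncomputable def NP (s v : Fin n) (B L : ℝ) : ℕ :=
  Nat.card {p : List E // IsWalk src dst s v p ∧
      (p.map l).sum ≤ B ∧ (p.map l').sum ≤ L}

def revEquiv (s v : Fin n) (B L : ℝ) :
    {p : List E // IsWalk src dst s v p ∧ (p.map l).sum ≤ B ∧ (p.map l').sum ≤ L} ≃
    {p : List E // RWalk src dst v s p ∧ (p.map l).sum ≤ B ∧ (p.map l').sum ≤ L} where
  toFun x := ⟨x.1.reverse, (isWalk_iff_rwalk_reverse src dst).1 x.2.1,
    by rw [List.map_reverse, List.sum_reverse]; exact x.2.2.1,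
    by rw [List.map_reverse, List.sum_reverse]; exact x.2.2.2⟩
  invFun x := ⟨x.1.reverse, by
      have := (isWalk_iff_rwalk_reverse (p := x.1.reverse) src dst (u := s) (v := v))
      rw [List.reverse_reverse] at this
      exact this.2 x.2.1,
    by rw [List.map_reverse, List.sum_reverse]; exact x.2.2.1,
    by rw [List.map_reverse, List.sum_reverse]; exact x.2.2.2⟩
  left_inv x := Subtype.ext (by simp)
  right_inv x := Subtype.ext (by simp)

def decompEquiv (s v : Fin n) (B L : ℝ) (hvs : v ≠ s) :
    {p : List E // RWalk src dst v s p ∧ (p.map l).sum ≤ B ∧ (p.map l').sum ≤ L} ≃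
    Σ e : {e : E // dst e = v}, {p : List E // RWalk src dst (src e.1) s p ∧
      (p.map l).sum ≤ B - l e.1 ∧ (p.map l').sum ≤ L - l' e.1} where
  toFun x := match x with
    | ⟨[], h⟩ => absurd h.1 hvs
    | ⟨e :: p, h⟩ => ⟨⟨e, h.1.1⟩, ⟨p, h.1.2, by
        have h1 := h.2.1; have h2 := h.2.2
        simp only [List.map_cons, List.sum_cons] at h1 h2
        constructor <;> linarith⟩⟩
  invFun x := ⟨x.1.1 :: x.2.1, ⟨x.1.2, x.2.2.1⟩, by
      have h1 := x.2.2.2.1; have h2 := x.2.2.2.2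
      simp only [List.map_cons, List.sum_cons]
      constructor <;> linarith⟩
  left_inv x := match x with
    | ⟨[], h⟩ => absurd h.1 hvs
    | ⟨e :: p, h⟩ => rfl
  right_inv x := rfl

end np

section np2

variable {n : ℕ} {E : Type} [Fintype E] (src dst : E → Fin n) (l l' : E → ℝ)
  (htopo : ∀ e, src e < dst e)

include htopo

theorem NP_mono (s v : Fin n) {B L B' L' : ℝ} (hB : B ≤ B') (hL : L ≤ L') :
    NP src dst l l' s v B L ≤ NP src dst l l' s v B' L' := by
  have : Finite {p : List E // IsWalk src dst s v p ∧
      (p.map l).sum ≤ B' ∧ (p.map l').sum ≤ L'} :=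
    isWalk_finite src dst htopo s v _
  exact Nat.card_le_card_of_injective
    (fun x => ⟨x.1, x.2.1, le_trans x.2.2.1 hB, le_trans x.2.2.2 hL⟩)
    (fun x y hxy => by
      simp only [Subtype.mk.injEq] at hxy
      exact Subtype.ext hxy)

theorem NP_self_le_one (s : Fin n) (B L : ℝ) : NP src dst l l' s s B L ≤ 1 := by
  have hsub : Subsingleton {p : List E // IsWalk src dst s s p ∧
      (p.map l).sum ≤ B ∧ (p.map l').sum ≤ L} := by
    constructor
    rintro ⟨p, hp, -⟩ ⟨q, hq, -⟩
    have hp' := rwalk_length src dst htopo ((isWalk_iff_rwalk_reverse src dst).1 hp)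
    have hq' := rwalk_length src dst htopo ((isWalk_iff_rwalk_reverse src dst).1 hq)
    simp only [List.length_reverse] at hp' hq'
    have : p = [] := List.eq_nil_of_length_eq_zero (by omega)
    have : q = [] := List.eq_nil_of_length_eq_zero (by omega)
    subst_vars; rfl
  rcases isEmpty_or_nonempty {p : List E // IsWalk src dst s s p ∧
      (p.map l).sum ≤ B ∧ (p.map l').sum ≤ L} with he | hne
  · rw [NP, Nat.card_of_isEmpty]; omega
  · rw [NP, Nat.card_unique]

theorem NP_self_eq_one (s : Fin n) {B L : ℝ} (hB : 0 ≤ B) (hL : 0 ≤ L) :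
    NP src dst l l' s s B L = 1 := by
  refine le_antisymm (NP_self_le_one src dst l l' htopo s B L) ?_
  have : Finite {p : List E // IsWalk src dst s s p ∧
      (p.map l).sum ≤ B ∧ (p.map l').sum ≤ L} := isWalk_finite src dst htopo s s _
  refine Nat.one_le_iff_ne_zero.2 (Nat.card_ne_zero.2 ⟨⟨⟨[], rfl, by simpa, by simpa⟩⟩, this⟩)

theorem NP_pos_empty (s v : Fin n) {B L : ℝ} (h : 0 < NP src dst l l' s v B L)
    (hvs : v = s) : 0 ≤ B ∧ 0 ≤ L := by
  subst hvs
  have : Nonempty {p : List E // IsWalk src dst v v p ∧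
      (p.map l).sum ≤ B ∧ (p.map l').sum ≤ L} := Nat.card_pos_iff.1 h |>.1
  obtain ⟨p, hp, h1, h2⟩ := this
  have hp' := rwalk_length src dst htopo ((isWalk_iff_rwalk_reverse src dst).1 hp)
  simp only [List.length_reverse] at hp'
  have : p = [] := List.eq_nil_of_length_eq_zero (by omega)
  subst this
  simp only [List.map_nil, List.sum_nil] at h1 h2
  exact ⟨h1, h2⟩

theorem NP_decomp (s v : Fin n) (B L : ℝ) (hvs : v ≠ s) :
    NP src dst l l' s v B L = ∑ e ∈ Finset.univ.filter (fun e => dst e = v),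
      NP src dst l l' s (src e) (B - l e) (L - l' e) := by
  have e1 := (revEquiv src dst l l' s v B L).trans (decompEquiv src dst l l' s v B L hvs)
  have e2 : ∀ e : {e : E // dst e = v},
      {p : List E // RWalk src dst (src e.1) s p ∧
        (p.map l).sum ≤ B - l e.1 ∧ (p.map l').sum ≤ L - l' e.1} ≃
      {p : List E // IsWalk src dst s (src e.1) p ∧
        (p.map l).sum ≤ B - l e.1 ∧ (p.map l').sum ≤ L - l' e.1} :=
    fun e => (revEquiv src dst l l' s (src e.1) (B - l e.1) (L - l' e.1)).symm
  have e3 := e1.trans (Equiv.sigmaCongrRight e2)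
  rw [NP, Nat.card_congr e3]
  haveI : ∀ e : {e : E // dst e = v}, Fintype {p : List E // IsWalk src dst s (src e.1) p ∧
      (p.map l).sum ≤ B - l e.1 ∧ (p.map l').sum ≤ L - l' e.1} := fun e =>
    @Fintype.ofFinite _ (isWalk_finite src dst htopo _ _ _)
  rw [Nat.card_eq_fintype_card, Fintype.card_sigma]
  rw [Finset.sum_subtype (Finset.univ.filter (fun e => dst e = v))
    (p := fun e => dst e = v) (by simp)
    (fun e => NP src dst l l' s (src e) (B - l e) (L - l' e))]
  refine Finset.sum_congr rfl fun i _ => ?_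
  rw [NP, Nat.card_eq_fintype_card]

end np2

section tau

variable {n : ℕ} {E : Type} [Fintype E] (src dst : E → Fin n) (l l' : E → ℝ)
  (htopo : ∀ e, src e < dst e)

theorem tau2_eq_NP (s v : Fin n) (a B : ℝ) :
    tau2 src dst l l' s v a B = sInf {x : EReal | ∃ L : ℝ, x = (L : EReal) ∧
      a ≤ (NP src dst l l' s v B L : ℝ)} := rfl

include htopo

theorem tau2_le_imp (s v : Fin n) {a B L₂ : ℝ}
    (h : tau2 src dst l l' s v a B ≤ (L₂ : EReal)) :
    ∀ L : ℝ, L₂ < L → a ≤ (NP src dst l l' s v B L : ℝ) := by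
  intro L hL
  rw [tau2_eq_NP] at h
  have h2 : sInf {x : EReal | ∃ L : ℝ, x = (L : EReal) ∧
      a ≤ (NP src dst l l' s v B L : ℝ)} < (L : EReal) :=
    lt_of_le_of_lt h (by exact_mod_cast hL)
  obtain ⟨x, hx, hxL⟩ := sInf_lt_iff.1 h2
  obtain ⟨L', rfl, hL'⟩ := hx
  have : L' ≤ L := le_of_lt (by exact_mod_cast hxL)
  calc a ≤ (NP src dst l l' s v B L' : ℝ) := hL'
    _ ≤ _ := by exact_mod_cast NP_mono src dst l l' htopo s v le_rfl this

omit htopo in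
theorem tau2_le_of_forall (s v : Fin n) {a B L₂ : ℝ}
    (h : ∀ L : ℝ, L₂ < L → a ≤ (NP src dst l l' s v B L : ℝ)) :
    tau2 src dst l l' s v a B ≤ (L₂ : EReal) := by
  rw [tau2_eq_NP]
  by_contra hc
  push_neg at hc
  obtain ⟨y, hy1, hy2⟩ := EReal.exists_between_coe_real hc
  refine absurd (sInf_le ?_) (not_le.2 hy2)
  exact ⟨y, rfl, h y (by exact_mod_cast hy1)⟩

theorem tau2_le_imp_at (s v : Fin n) {a B L₂ : ℝ}
    (h : tau2 src dst l l' s v a B ≤ (L₂ : EReal)) :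
    a ≤ (NP src dst l l' s v B L₂ : ℝ) := by
  classical
  set S₀ : Set ℝ := {w : ℝ | (∃ p : List E, (IsWalk src dst s v p ∧
      (p.map l).sum ≤ B) ∧ w = (p.map l').sum) ∧ L₂ < w} with hS₀
  have hfin : S₀.Finite := by
    have h1 : Finite {p : List E // IsWalk src dst s v p ∧ (p.map l).sum ≤ B} :=
      isWalk_finite src dst htopo s v _
    have h2 : {p : List E | IsWalk src dst s v p ∧ (p.map l).sum ≤ B}.Finite :=
      Set.finite_coe_iff.1 h1
    refine (h2.image (fun p => (p.map l').sum)).subset ?_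
    rintro w ⟨⟨p, hp, hw⟩, hw2⟩
    exact ⟨p, hp, hw.symm⟩
  -- choose L with L₂ < L such that no path weight lies in (L₂, L]
  obtain ⟨L, hL, hLgood⟩ : ∃ L : ℝ, L₂ < L ∧ ∀ w ∈ S₀, L < w := by
    rcases S₀.eq_empty_or_nonempty with he | hne
    · exact ⟨L₂ + 1, by linarith, fun w hw => absurd hw (by simp [he])⟩
    · obtain ⟨m, hm, hmin⟩ := Set.exists_min_image S₀ id hfin hne
      have hm2 : L₂ < m := hm.2
      refine ⟨(L₂ + m) / 2, by linarith, fun w hw => lt_of_lt_of_le ?_ (hmin w hw)⟩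
      show (L₂ + m) / 2 < m
      linarith
  have key : NP src dst l l' s v B L ≤ NP src dst l l' s v B L₂ := by
    have hfin2 : Finite {p : List E // IsWalk src dst s v p ∧
        (p.map l).sum ≤ B ∧ (p.map l').sum ≤ L₂} := isWalk_finite src dst htopo s v _
    refine Nat.card_le_card_of_injective (fun x => ⟨x.1, x.2.1, x.2.2.1, ?_⟩) ?_
    · by_contra hgt
      push_neg at hgt
      have : (x.1.map l').sum ∈ S₀ := ⟨⟨x.1, ⟨x.2.1, x.2.2.1⟩, rfl⟩, hgt⟩
      exact absurd x.2.2.2 (not_le.2 (hLgood _ this))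
    · intro x y hxy
      simp only [Subtype.mk.injEq] at hxy
      exact Subtype.ext hxy
  calc a ≤ (NP src dst l l' s v B L : ℝ) := tau2_le_imp src dst l l' htopo s v h L hL
    _ ≤ _ := by exact_mod_cast key

end tau

theorem ereal_lt_sub_of_add_lt {x : EReal} {c L : ℝ} (h : x + (c : EReal) < (L : EReal)) :
    x < ((L - c : ℝ) : EReal) := by
  induction x using EReal.rec with
  | bot => exact bot_lt_iff_ne_bot.2 (EReal.coe_ne_bot _)
  | coe y =>
    rw [← EReal.coe_add, EReal.coe_lt_coe_iff] at h
    exact EReal.coe_lt_coe_iff.2 (by linarith)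
  | top => simp at h

theorem ereal_add_le_of_le_sub {x : EReal} {c L : ℝ} (h : x ≤ ((L - c : ℝ) : EReal)) :
    x + (c : EReal) ≤ (L : EReal) := by
  induction x using EReal.rec with
  | bot => simp
  | coe y =>
    rw [EReal.coe_le_coe_iff] at h
    rw [← EReal.coe_add]
    exact EReal.coe_le_coe_iff.2 (by linarith)
  | top => exact absurd (top_le_iff.1 h) (EReal.coe_ne_top _)

theorem countLB {n : ℕ} (hn : 0 < n) {E : Type} [Fintype E]
    (src dst : E → Fin n) (l l' : E → ℝ)
    (htopo : ∀ e, src e < dst e)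
    {q r : ℝ} (hq : 1 < q) (hr : 1 < r)
    (T2 : Fin n → ℝ → ℝ → EReal)
    (hTs1 : ∀ a x : ℝ, 0 < a → a ≤ 1 → 0 < x → T2 ⟨0, hn⟩ a x = 0)
    (hTs2 : ∀ a x : ℝ, 1 < a → 0 < x → T2 ⟨0, hn⟩ a x = ⊤)
    (hTrec : ∀ v : Fin n, v ≠ ⟨0, hn⟩ → ∀ j k : ℤ,
      T2 v (q ^ j) (r ^ k) = sInf {x : EReal |
        ∃ α : E → ℝ, (∀ e, dst e = v → 0 ≤ α e) ∧
          (∑ e ∈ Finset.univ.filter (fun e => dst e = v), α e) = 1 ∧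
          x = (Finset.univ.filter (fun e => dst e = v)).sup
            (fun e =>
              if α e = 0 then (⊥ : EReal)
              else if r ^ k - l e ≤ 0 then (⊤ : EReal)
              else T2 (src e) (q ^ ⌊(j : ℝ) + Real.logb q (α e)⌋)
                (r ^ ⌊Real.logb r (r ^ k - l e)⌋) + (l' e : EReal))}) :
    ∀ v : Fin n, ∀ j k' : ℤ, ∀ L : ℝ, T2 v (q ^ j) (r ^ k') < (L : EReal) →
      q ^ ((j : ℝ) - ((v : ℕ) : ℝ)) ≤ (NP src dst l l' ⟨0, hn⟩ v (r ^ k') L : ℝ) := by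
  have hq0 : (0:ℝ) < q := by linarith
  have hr0 : (0:ℝ) < r := by linarith
  suffices H : ∀ N : ℕ, ∀ v : Fin n, (v : ℕ) < N → ∀ j k' : ℤ, ∀ L : ℝ,
      T2 v (q ^ j) (r ^ k') < (L : EReal) →
      q ^ ((j : ℝ) - ((v : ℕ) : ℝ)) ≤ (NP src dst l l' ⟨0, hn⟩ v (r ^ k') L : ℝ) from
    fun v => H ((v : ℕ) + 1) v (Nat.lt_succ_self _)
  intro N
  induction N with
  | zero => intro v hv; omega
  | succ N ih =>
    intro v hv j k' L hT
    by_cases hv0 : v = ⟨0, hn⟩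
    · subst hv0
      rcases le_or_gt j 0 with hj | hj
      · rw [hTs1 _ _ (zpow_pos hq0 j) (zpow_le_one_of_nonpos₀ hq.le hj)
          (zpow_pos hr0 k')] at hT
        have hL : (0:ℝ) < L := by exact_mod_cast hT
        have h2 : NP src dst l l' ⟨0,hn⟩ ⟨0,hn⟩ (r^k') L = 1 :=
          NP_self_eq_one src dst l l' htopo _ (le_of_lt (zpow_pos hr0 k')) hL.le
        rw [h2]
        have hv' : (((⟨0,hn⟩ : Fin n) : ℕ) : ℝ) = 0 := by norm_num
        rw [hv', sub_zero, Nat.cast_one]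
        exact Real.rpow_le_one_of_one_le_of_nonpos hq.le (by exact_mod_cast hj)
      · rw [hTs2 _ _ (one_lt_zpow₀ hq (by omega)) (zpow_pos hr0 k')] at hT
        exact absurd hT (by simp)
    · rw [hTrec v hv0 j k'] at hT
      obtain ⟨x, hx, hxL⟩ := sInf_lt_iff.1 hT
      obtain ⟨α, hα0, hα1, rfl⟩ := hx
      have hv1 : 1 ≤ (v : ℕ) := by
        rcases Nat.eq_zero_or_pos (v : ℕ) with h0 | h0
        · exact absurd (Fin.ext h0) hv0
        · exact h0
      rw [NP_decomp src dst l l' htopo ⟨0,hn⟩ v (r^k') L hv0, Nat.cast_sum]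
      have key : ∀ e ∈ Finset.univ.filter (fun e => dst e = v),
          α e * q ^ ((j:ℝ) - ((v : ℕ):ℝ)) ≤
          (NP src dst l l' ⟨0,hn⟩ (src e) (r^k' - l e) (L - l' e) : ℝ) := by
        intro e he
        have hdst : dst e = v := (Finset.mem_filter.1 he).2
        by_cases hαe : α e = 0
        · rw [hαe, zero_mul]; positivity
        · have hαpos : 0 < α e := lt_of_le_of_ne (hα0 e hdst) (Ne.symm hαe)
          have hterm := lt_of_le_of_lt (Finset.le_sup he (f := fun e =>
              if α e = 0 then (⊥ : EReal)
              else if r ^ k' - l e ≤ 0 then (⊤ : EReal)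
              else T2 (src e) (q ^ ⌊(j : ℝ) + Real.logb q (α e)⌋)
                (r ^ ⌊Real.logb r (r ^ k' - l e)⌋) + (l' e : EReal))) hxL
          beta_reduce at hterm
          rw [if_neg hαe] at hterm
          by_cases hre : r^k' - l e ≤ 0
          · rw [if_pos hre] at hterm; exact absurd hterm (by simp)
          rw [if_neg hre] at hterm
          push_neg at hre
          set je := ⌊(j:ℝ) + Real.logb q (α e)⌋ with hje
          set ke := ⌊Real.logb r (r^k' - l e)⌋ with hke
          have hT' : T2 (src e) (q ^ je) (r ^ ke) < ((L - l' e : ℝ) : EReal) :=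
            ereal_lt_sub_of_add_lt hterm
          have hsrcv : ((src e : ℕ)) < (v : ℕ) := by
            have h5 := htopo e; rw [hdst] at h5; exact h5
          have h2 := ih (src e) (by omega) je ke (L - l' e) hT'
          have hbud : (r : ℝ) ^ ke ≤ r ^ k' - l e := by
            rw [← Real.rpow_intCast]
            calc r ^ ((ke : ℤ) : ℝ) ≤ r ^ Real.logb r (r^k' - l e) :=
                  Real.rpow_le_rpow_of_exponent_le hr.le (by exact_mod_cast Int.floor_le _)
              _ = r ^ k' - l e := Real.rpow_logb hr0 (ne_of_gt hr) hre
          have h3 : (NP src dst l l' ⟨0,hn⟩ (src e) (r ^ ke) (L - l' e) : ℝ) ≤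
              (NP src dst l l' ⟨0,hn⟩ (src e) (r^k' - l e) (L - l' e) : ℝ) := by
            exact_mod_cast NP_mono src dst l l' htopo _ _ hbud le_rfl
          have h4 : α e * q ^ ((j:ℝ) - ((v:ℕ):ℝ)) ≤
              q ^ (((je:ℤ):ℝ) - ((src e : ℕ):ℝ)) := by
            have e1 : α e * q ^ ((j:ℝ) - ((v:ℕ):ℝ)) =
                q ^ (Real.logb q (α e) + ((j:ℝ) - ((v:ℕ):ℝ))) := by
              rw [Real.rpow_add hq0, Real.rpow_logb hq0 (ne_of_gt hq) hαpos]
            rw [e1]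
            apply Real.rpow_le_rpow_of_exponent_le hq.le
            have hfl : (j:ℝ) + Real.logb q (α e) ≤ ((je:ℤ):ℝ) + 1 :=
              le_of_lt (Int.lt_floor_add_one _)
            have hsv : ((src e : ℕ) : ℝ) + 1 ≤ ((v:ℕ):ℝ) := by exact_mod_cast hsrcv
            linarith
          exact h4.trans (h2.trans h3)
      calc q ^ ((j:ℝ) - ((v:ℕ):ℝ))
          = ∑ e ∈ Finset.univ.filter (fun e => dst e = v),
            α e * q ^ ((j:ℝ) - ((v:ℕ):ℝ)) := by rw [← Finset.sum_mul, hα1, one_mul]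
        _ ≤ _ := Finset.sum_le_sum key

theorem T2UB {n : ℕ} (hn : 0 < n) {E : Type} [Fintype E]
    (src dst : E → Fin n) (l l' : E → ℝ)
    (htopo : ∀ e, src e < dst e) (hlnonneg : ∀ e, 0 ≤ l e)
    {q r : ℝ} (hq : 1 < q) (hr : 1 < r)
    (T2 : Fin n → ℝ → ℝ → EReal)
    (hTs1 : ∀ a x : ℝ, 0 < a → a ≤ 1 → 0 < x → T2 ⟨0, hn⟩ a x = 0)
    (hTrec : ∀ v : Fin n, v ≠ ⟨0, hn⟩ → ∀ j k : ℤ,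
      T2 v (q ^ j) (r ^ k) = sInf {x : EReal |
        ∃ α : E → ℝ, (∀ e, dst e = v → 0 ≤ α e) ∧
          (∑ e ∈ Finset.univ.filter (fun e => dst e = v), α e) = 1 ∧
          x = (Finset.univ.filter (fun e => dst e = v)).sup
            (fun e =>
              if α e = 0 then (⊥ : EReal)
              else if r ^ k - l e ≤ 0 then (⊤ : EReal)
              else T2 (src e) (q ^ ⌊(j : ℝ) + Real.logb q (α e)⌋)
                (r ^ ⌊Real.logb r (r ^ k - l e)⌋) + (l' e : EReal))}) :
    ∀ v : Fin n, ∀ j k' : ℤ, ∀ L : ℝ,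
      (q : ℝ) ^ j ≤ (NP src dst l l' ⟨0, hn⟩ v (r ^ (k' - ((v : ℕ) : ℤ))) L : ℝ) →
      T2 v (q ^ j) (r ^ k') ≤ (L : EReal) := by
  have hq0 : (0:ℝ) < q := by linarith
  have hr0 : (0:ℝ) < r := by linarith
  suffices H : ∀ N : ℕ, ∀ v : Fin n, (v : ℕ) < N → ∀ j k' : ℤ, ∀ L : ℝ,
      (q : ℝ) ^ j ≤ (NP src dst l l' ⟨0, hn⟩ v (r ^ (k' - ((v : ℕ) : ℤ))) L : ℝ) →
      T2 v (q ^ j) (r ^ k') ≤ (L : EReal) from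
    fun v => H ((v : ℕ) + 1) v (Nat.lt_succ_self _)
  intro N
  induction N with
  | zero => intro v hv; omega
  | succ N ih =>
    intro v hv j k' L h
    by_cases hv0 : v = ⟨0, hn⟩
    · subst hv0
      have hNP1 : NP src dst l l' ⟨0,hn⟩ ⟨0,hn⟩ (r ^ (k' - (((⟨0,hn⟩ : Fin n) : ℕ) : ℤ))) L ≤ 1 :=
        NP_self_le_one src dst l l' htopo _ _ _
      have hqj1 : (q:ℝ)^j ≤ 1 := le_trans h (by exact_mod_cast hNP1)
      have hj : j ≤ 0 := by
        by_contra hj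
        push_neg at hj
        exact absurd hqj1 (not_le.2 (one_lt_zpow₀ hq (by omega)))
      have hpos : 0 < NP src dst l l' ⟨0,hn⟩ ⟨0,hn⟩ (r ^ (k' - (((⟨0,hn⟩ : Fin n) : ℕ) : ℤ))) L :=
        Nat.cast_pos.1 (lt_of_lt_of_le (zpow_pos hq0 j) h)
      have hBL := NP_pos_empty src dst l l' htopo ⟨0,hn⟩ ⟨0,hn⟩ hpos rfl
      rw [hTs1 _ _ (zpow_pos hq0 j) (zpow_le_one_of_nonpos₀ hq.le hj) (zpow_pos hr0 k')]
      exact_mod_cast hBL.2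
    · have hv1 : 1 ≤ (v : ℕ) := by
        rcases Nat.eq_zero_or_pos (v : ℕ) with h0 | h0
        · exact absurd (Fin.ext h0) hv0
        · exact h0
      set B : ℝ := r ^ (k' - ((v : ℕ) : ℤ)) with hB
      set Mf : E → ℕ := fun e =>
        NP src dst l l' ⟨0,hn⟩ (src e) (B - l e) (L - l' e) with hMf
      set T : ℕ := NP src dst l l' ⟨0,hn⟩ v B L with hT
      have hdec : T = ∑ e ∈ Finset.univ.filter (fun e => dst e = v), Mf e :=
        NP_decomp src dst l l' htopo ⟨0,hn⟩ v B L hv0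
      have hTpos : (0:ℝ) < (T:ℝ) := lt_of_lt_of_le (zpow_pos hq0 j) h
      set α : E → ℝ := fun e => if dst e = v then (Mf e : ℝ) / (T : ℝ) else 0 with hα
      have hα0 : ∀ e, dst e = v → 0 ≤ α e := fun e he => by
        simp only [hα, if_pos he]; positivity
      have hα1 : (∑ e ∈ Finset.univ.filter (fun e => dst e = v), α e) = 1 := by
        have hcg : ∀ e ∈ Finset.univ.filter (fun e => dst e = v),
            α e = (Mf e : ℝ) / (T : ℝ) := fun e he => by
          simp only [hα, if_pos (Finset.mem_filter.1 he).2]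
        rw [Finset.sum_congr rfl hcg, ← Finset.sum_div,
          div_eq_one_iff_eq (ne_of_gt hTpos)]
        exact_mod_cast hdec.symm
      rw [hTrec v hv0 j k']
      refine le_trans (sInf_le ⟨α, hα0, hα1, rfl⟩) (Finset.sup_le ?_)
      intro e he
      have hdst : dst e = v := (Finset.mem_filter.1 he).2
      by_cases hαe : α e = 0
      · rw [if_pos hαe]; exact bot_le
      rw [if_neg hαe]
      have hMe : 1 ≤ Mf e := by
        rcases Nat.eq_zero_or_pos (Mf e) with h0 | h0
        · exact absurd (by rw [hα]; simp [if_pos hdst, h0]) hαe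
        · exact h0
      have hαpos : 0 < α e := lt_of_le_of_ne (hα0 e hdst) (Ne.symm hαe)
      -- l e ≤ B - 0 hence r^k' - l e > 0
      have hlB : l e ≤ B := by
        have hpos' : 0 < Mf e := hMe
        have hne : Nonempty {p : List E // IsWalk src dst ⟨0,hn⟩ (src e) p ∧
            (p.map l).sum ≤ B - l e ∧ (p.map l').sum ≤ L - l' e} := (Nat.card_pos_iff.1 hpos').1
        obtain ⟨p, _, h1, _⟩ := hne
        have : 0 ≤ (p.map l).sum := List.sum_nonneg (by
          intro x hx
          obtain ⟨e', _, rfl⟩ := List.mem_map.1 hx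
          exact hlnonneg e')
        linarith
      have hBlt : B < r ^ k' := by
        rw [hB]
        exact zpow_lt_zpow_right₀ hr (by omega)
      have hre : 0 < r ^ k' - l e := by linarith
      rw [if_neg (not_le.2 hre)]
      set je := ⌊(j:ℝ) + Real.logb q (α e)⌋ with hje
      set ke := ⌊Real.logb r (r ^ k' - l e)⌋ with hke
      have hsrcv : ((src e : ℕ)) < (v : ℕ) := by
        have h5 := htopo e; rw [hdst] at h5; exact h5
      -- show the count hypothesis for the IH
      have hqje : (q:ℝ) ^ je ≤ (Mf e : ℝ) := by
        have e1 : (q:ℝ) ^ je ≤ α e * q ^ j := by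
          rw [← Real.rpow_intCast q je, ← Real.rpow_intCast q j]
          calc (q:ℝ) ^ ((je:ℤ):ℝ) ≤ q ^ ((j:ℝ) + Real.logb q (α e)) :=
                Real.rpow_le_rpow_of_exponent_le hq.le (by exact_mod_cast Int.floor_le _)
            _ = α e * q ^ ((j:ℤ):ℝ) := by
                rw [Real.rpow_add hq0, Real.rpow_logb hq0 (ne_of_gt hq) hαpos]
                push_cast
                ring
        have e2 : α e * q ^ j ≤ (Mf e : ℝ) := by
          rw [hα]; simp only [if_pos hdst]
          rw [div_mul_eq_mul_div, div_le_iff₀ hTpos]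
          exact mul_le_mul_of_nonneg_left h (Nat.cast_nonneg _)
        linarith
      have hbud : B - l e ≤ r ^ (ke - ((src e : ℕ) : ℤ)) := by
        set y : ℝ := r ^ k' - l e with hy
        have hsv : ((src e : ℕ) : ℝ) + 1 ≤ ((v:ℕ):ℝ) := by exact_mod_cast hsrcv
        have hB' : B = r ^ (((k' : ℤ) : ℝ) - ((v:ℕ):ℝ)) := by
          rw [hB, ← Real.rpow_intCast]
          push_cast
          ring_nf
        have hrv1 : r ^ (-(((v:ℕ):ℝ))) ≤ 1 :=
          Real.rpow_le_one_of_one_le_of_nonpos hr.le (by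
            have : (0:ℝ) ≤ ((v:ℕ):ℝ) := by positivity
            linarith)
        have e5 : l e * r ^ (-(((v:ℕ):ℝ))) ≤ l e :=
          mul_le_of_le_one_right (hlnonneg e) hrv1
        have e4 : y * r ^ (-(((v:ℕ):ℝ))) =
            r ^ (((k' : ℤ) : ℝ) - ((v:ℕ):ℝ)) - l e * r ^ (-(((v:ℕ):ℝ))) := by
          rw [hy, sub_mul, ← Real.rpow_intCast r k', ← Real.rpow_add hr0]
          ring_nf
        have e3 : y * r ^ (-(((v:ℕ):ℝ))) ≤ y * r ^ (-(1:ℝ) - ((src e : ℕ):ℝ)) :=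
          mul_le_mul_of_nonneg_left
            (Real.rpow_le_rpow_of_exponent_le hr.le (by linarith)) (le_of_lt hre)
        have e2 : r ^ (Real.logb r y - 1 - ((src e : ℕ):ℝ)) =
            y * r ^ (-(1:ℝ) - ((src e : ℕ):ℝ)) := by
          rw [show Real.logb r y - 1 - ((src e : ℕ):ℝ) =
            Real.logb r y + (-(1:ℝ) - ((src e : ℕ):ℝ)) by ring]
          rw [Real.rpow_add hr0, Real.rpow_logb hr0 (ne_of_gt hr) hre]
        have e1 : Real.logb r y - 1 - ((src e : ℕ):ℝ) ≤
            ((ke - ((src e : ℕ) : ℤ) : ℤ) : ℝ) := by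
          push_cast
          have := Int.sub_one_lt_floor (Real.logb r y)
          rw [hke]
          linarith
        calc B - l e = r ^ (((k' : ℤ) : ℝ) - ((v:ℕ):ℝ)) - l e := by rw [hB']
          _ ≤ y * r ^ (-(((v:ℕ):ℝ))) := by rw [e4]; linarith
          _ ≤ y * r ^ (-(1:ℝ) - ((src e : ℕ):ℝ)) := e3
          _ = r ^ (Real.logb r y - 1 - ((src e : ℕ):ℝ)) := e2.symm
          _ ≤ r ^ (((ke - ((src e : ℕ) : ℤ) : ℤ) : ℝ)) :=
              Real.rpow_le_rpow_of_exponent_le hr.le e1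
          _ = r ^ (ke - ((src e : ℕ) : ℤ)) := Real.rpow_intCast r _
      have hMeNP : (Mf e : ℝ) ≤
          (NP src dst l l' ⟨0,hn⟩ (src e) (r ^ (ke - ((src e : ℕ) : ℤ))) (L - l' e) : ℝ) := by
        exact_mod_cast NP_mono src dst l l' htopo _ _ hbud le_rfl
      have h2 := ih (src e) (by omega) je ke (L - l' e) (le_trans hqje hMeNP)
      exact ereal_add_le_of_le_sub h2

theorem stmt3
    {n : ℕ} (hn : 0 < n) {E : Type} [Fintype E]
    (src dst : E → Fin n) (l l' : E → ℝ)
    (htopo : ∀ e, src e < dst e)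
    (hin : ∀ v : Fin n, v ≠ ⟨0, hn⟩ → ∃ e, dst e = v)
    (hlnonneg : ∀ e, 0 ≤ l e)
    (ε δ : ℝ) (hε : 0 < ε) (hδ : 0 < δ)
    (q r : ℝ) (hqdef : q = (1 + ε) ^ ((1 : ℝ) / n)) (hrdef : r = (1 + δ) ^ ((1 : ℝ) / n))
    (T2 : Fin n → ℝ → ℝ → EReal)
    (hT0 : ∀ v : Fin n, ∀ x : ℝ, T2 v 0 x = ⊥)
    (hTs1 : ∀ a x : ℝ, 0 < a → a ≤ 1 → 0 < x → T2 ⟨0, hn⟩ a x = 0)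
    (hTs2 : ∀ a x : ℝ, 1 < a → 0 < x → T2 ⟨0, hn⟩ a x = ⊤)
    (hTrec : ∀ v : Fin n, v ≠ ⟨0, hn⟩ → ∀ j k : ℤ,
      T2 v (q ^ j) (r ^ k) = sInf {x : EReal |
        ∃ α : E → ℝ, (∀ e, dst e = v → 0 ≤ α e) ∧
          (∑ e ∈ Finset.univ.filter (fun e => dst e = v), α e) = 1 ∧
          x = (Finset.univ.filter (fun e => dst e = v)).sup
            (fun e =>
              if α e = 0 then (⊥ : EReal)
              else if r ^ k - l e ≤ 0 then (⊤ : EReal)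
              else T2 (src e) (q ^ ⌊(j : ℝ) + Real.logb q (α e)⌋)
                (r ^ ⌊Real.logb r (r ^ k - l e)⌋) + (l' e : EReal))})
    (L₁ L₂ : ℝ) (hL₁ : 0 < L₁)
    (K : ℤ) (hK : K = ⌈Real.logb r L₁⌉)
    (k : ℤ) (hk : (n : ℤ) ≤ k)
    (hk1 : T2 ⟨n - 1, by omega⟩ (q ^ k) (r ^ K) ≤ (L₂ : EReal))
    (hk2 : (L₂ : EReal) < T2 ⟨n - 1, by omega⟩ (q ^ (k + 1)) (r ^ K))
    (a : ℕ)
    (ha1 : tau2 src dst l l' ⟨0, hn⟩ ⟨n - 1, by omega⟩ (a : ℝ) (r ^ (K - n)) ≤ (L₂ : EReal))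
    (ha2 : ∀ m : ℕ, tau2 src dst l l' ⟨0, hn⟩ ⟨n - 1, by omega⟩ (m : ℝ) (r ^ (K - n)) ≤ (L₂ : EReal) →
      m ≤ a)
    (b : ℕ)
    (hb1 : tau2 src dst l l' ⟨0, hn⟩ ⟨n - 1, by omega⟩ (b : ℝ) (r ^ K) ≤ (L₂ : EReal))
    (hb2 : ∀ m : ℕ, tau2 src dst l l' ⟨0, hn⟩ ⟨n - 1, by omega⟩ (m : ℝ) (r ^ K) ≤ (L₂ : EReal) →
      m ≤ b) :
    a ≤ b ∧ (a : ℝ) / q ^ k ≤ 1 + ε ∧ q ^ k / (b : ℝ) ≤ 1 + ε := by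
  have hn' : ((n:ℝ)) ≠ 0 := Nat.cast_ne_zero.2 (by omega)
  have hq1 : 1 < q := by
    rw [hqdef]
    exact (Real.one_lt_rpow_iff_of_pos (by linarith)).2
      (Or.inl ⟨by linarith, div_pos one_pos (Nat.cast_pos.2 hn)⟩)
  have hr1 : 1 < r := by
    rw [hrdef]
    exact (Real.one_lt_rpow_iff_of_pos (by linarith)).2
      (Or.inl ⟨by linarith, div_pos one_pos (Nat.cast_pos.2 hn)⟩)
  have hq0 : (0:ℝ) < q := by linarith
  have hqn : q ^ ((n:ℕ) : ℤ) = 1 + ε := by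
    rw [hqdef, ← Real.rpow_intCast, ← Real.rpow_mul (by linarith : (0:ℝ) ≤ 1 + ε)]
    rw [show (1:ℝ)/n * ((((n:ℕ):ℤ)):ℝ) = 1 by push_cast; field_simp]
    exact Real.rpow_one _
  set s0 : Fin n := ⟨0, hn⟩ with hs0
  set vn : Fin n := ⟨n - 1, by omega⟩ with hvn
  have hvnval : ((vn : ℕ) : ℤ) = (n : ℤ) - 1 := by
    rw [hvn]; simp; omega
  -- Claim 1 : a ≤ b
  have hab : a ≤ b := by
    apply hb2 a
    apply tau2_le_of_forall src dst l l'
    intro L hL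
    have h1 := tau2_le_imp src dst l l' htopo s0 vn ha1 L hL
    calc (a:ℝ) ≤ (NP src dst l l' s0 vn (r ^ (K - (n:ℤ))) L : ℝ) := h1
      _ ≤ _ := by
        exact_mod_cast NP_mono src dst l l' htopo s0 vn
          (zpow_le_zpow_right₀ hr1.le (by omega)) le_rfl
  refine ⟨hab, ?_, ?_⟩
  -- Claim 2 : a / q^k ≤ 1 + ε
  · have hcount : ¬ ((q:ℝ)^(k+1) ≤
        (NP src dst l l' s0 vn (r ^ (K - ((vn : ℕ) : ℤ))) L₂ : ℝ)) := by
      intro hc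
      exact absurd (T2UB hn src dst l l' htopo hlnonneg hq1 hr1 T2 hTs1 hTrec
        vn (k+1) K L₂ hc) (not_le.2 hk2)
    push_neg at hcount
    have ha' : (a:ℝ) ≤ (NP src dst l l' s0 vn (r ^ (K - (n:ℤ))) L₂ : ℝ) :=
      tau2_le_imp_at src dst l l' htopo s0 vn ha1
    have ha'' : (a:ℝ) ≤ (NP src dst l l' s0 vn (r ^ (K - ((vn : ℕ) : ℤ))) L₂ : ℝ) := by
      refine le_trans ha' ?_
      exact_mod_cast NP_mono src dst l l' htopo s0 vn
        (zpow_le_zpow_right₀ hr1.le (by omega)) le_rfl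
    have halt : (a:ℝ) < q ^ (k+1) := lt_of_le_of_lt ha'' hcount
    have h2 : (q:ℝ) ^ (k+1) ≤ q ^ (k + (n:ℤ)) := zpow_le_zpow_right₀ hq1.le (by omega)
    have h3 : (q:ℝ) ^ (k + (n:ℤ)) = q ^ k * (1 + ε) := by
      rw [zpow_add₀ (ne_of_gt hq0), hqn]
    rw [div_le_iff₀ (zpow_pos hq0 k)]
    nlinarith [zpow_pos hq0 k]
  -- Claim 3 : q^k / b ≤ 1 + ε
  · set c : ℝ := q ^ (k + 1 - (n:ℤ)) with hc
    have hcpos : 0 < c := zpow_pos hq0 _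
    have hcm : ∀ L : ℝ, L₂ < L → ((⌈c⌉₊ : ℝ)) ≤
        (NP src dst l l' s0 vn (r ^ K) L : ℝ) := by
      intro L hL
      have hlt : T2 vn (q ^ k) (r ^ K) < (L : EReal) :=
        lt_of_le_of_lt hk1 (by exact_mod_cast hL)
      have h := countLB hn src dst l l' htopo hq1 hr1 T2 hTs1 hTs2 hTrec
        vn k K L hlt
      have hc' : c ≤ (NP src dst l l' s0 vn (r ^ K) L : ℝ) := by
        refine le_trans (le_of_eq ?_) h
        rw [hc, ← Real.rpow_intCast]
        congr 1
        have : ((vn : ℕ) : ℝ) = (n : ℝ) - 1 := by exact_mod_cast hvnval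
        push_cast
        rw [this]
        ring
      have : ⌈c⌉₊ ≤ NP src dst l l' s0 vn (r ^ K) L := Nat.ceil_le.2 hc'
      exact_mod_cast this
    have htau : tau2 src dst l l' s0 vn ((⌈c⌉₊ : ℕ) : ℝ) (r ^ K) ≤ (L₂ : EReal) :=
      tau2_le_of_forall src dst l l' s0 vn hcm
    have hm0b : ⌈c⌉₊ ≤ b := hb2 ⌈c⌉₊ htau
    have hbc : c ≤ (b : ℝ) := le_trans (Nat.le_ceil c) (by exact_mod_cast hm0b)
    have hbpos : (0:ℝ) < b := lt_of_lt_of_le hcpos hbc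
    rw [div_le_iff₀ hbpos]
    have h4 : (q:ℝ) ^ (k - (n:ℤ)) ≤ c := by
      rw [hc]; exact zpow_le_zpow_right₀ hq1.le (by omega)
    have h5 : (q:ℝ) ^ k = q ^ (k - (n:ℤ)) * (1 + ε) := by
      rw [← hqn, ← zpow_add₀ (ne_of_gt hq0)]
      congr 1
      omega
    nlinarith
end

section
/- Let v be a vertex with v ≠ s whose incoming edges come from predecessors p_1,…,p_d with d ≥ 1 (with multiplicity for parallel edges) and edge weights l_1,…,l_d, and let a ≥ 1 be an integer. Then the minimum over all tuples (α_1,…,α_d) of nonnegative reals with α_1+⋯+α_d = 1 of max_{1≤s≤d} ( τ(p_s, α_s·a) + l_s ) equals the minimum over all tuples (a_1,…,a_d) of nonnegative integers with a_1+⋯+a_d = a of max_{1≤s≤d} ( τ(p_s, a_s) + l_s ). -/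
open scoped BigOperators

lemma tau_mono {V E : Type} (src dst : E → V) (w : E → ℝ) (s v : V) {a b : ℝ}
    (h : a ≤ b) : tau src dst w s v a ≤ tau src dst w s v b := by
  apply sInf_le_sInf
  rintro x ⟨L, hx, hL⟩
  exact ⟨L, hx, le_trans h hL⟩

lemma tau_ceil_eq {V E : Type} (src dst : E → V) (w : E → ℝ) (s v : V) (a : ℝ) :
    tau src dst w s v ((⌈a⌉ : ℤ) : ℝ) = tau src dst w s v a := by
  unfold tau
  congr 1
  ext x
  constructor <;> rintro ⟨L, hx, hL⟩ <;> refine ⟨L, hx, ?_⟩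
  · exact le_trans (Int.le_ceil a) hL
  · have : ⌈a⌉ ≤ ((Nat.card {p : List E // IsWalk src dst s v p ∧ (p.map w).sum ≤ L} : ℤ)) := by
      rw [Int.ceil_le]; push_cast; exact hL
    exact_mod_cast this

lemma exists_le_sum_eq {E : Type} [DecidableEq E] (s : Finset E) :
    ∀ (g : E → ℕ) (a : ℕ), a ≤ ∑ e ∈ s, g e →
      ∃ f : E → ℕ, (∀ e ∈ s, f e ≤ g e) ∧ ∑ e ∈ s, f e = a := by
  induction s using Finset.induction_on with
  | empty =>
    intro g a ha
    simp only [Finset.sum_empty, Nat.le_zero] at ha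
    exact ⟨fun _ => 0, by simp, by simp [ha]⟩
  | insert e s hnot ih =>
    intro g a ha
    rw [Finset.sum_insert hnot] at ha
    set b := min a (g e) with hb
    have hrem : a - b ≤ ∑ x ∈ s, g x := by omega
    obtain ⟨f, hf1, hf2⟩ := ih g (a - b) hrem
    refine ⟨Function.update f e b, ?_, ?_⟩
    · intro x hx
      rcases Finset.mem_insert.mp hx with rfl | hx2
      · simp [Function.update_self]; omega
      · rw [Function.update_of_ne (by rintro rfl; exact hnot hx2)]
        exact hf1 x hx2
    · rw [Finset.sum_insert hnot, Function.update_self]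
      have : ∑ x ∈ s, Function.update f e b x = ∑ x ∈ s, f x := by
        apply Finset.sum_congr rfl
        intro x hx
        exact Function.update_of_ne (by rintro rfl; exact hnot hx) _ _
      rw [this, hf2]
      omega

theorem stmt9
    {V E : Type} [Fintype V] [Fintype E] [DecidableEq V]
    (src dst : E → V) (w : E → ℝ)
    (ord : V → ℕ) (hacyc : ∀ e, ord (src e) < ord (dst e))
    (s : V) (v : V) (hv : v ≠ s)
    (hd : (Finset.univ.filter (fun e => dst e = v)).Nonempty)
    (a : ℕ) (ha : 1 ≤ a) :
    sInf {x : EReal |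
      ∃ α : E → ℝ, (∀ e, dst e = v → 0 ≤ α e) ∧
        (∑ e ∈ Finset.univ.filter (fun e => dst e = v), α e) = 1 ∧
        x = (Finset.univ.filter (fun e => dst e = v)).sup
          (fun e => tau src dst w s (src e) (α e * a) + (w e : EReal))} =
    sInf {x : EReal |
      ∃ f : E → ℕ,
        (∑ e ∈ Finset.univ.filter (fun e => dst e = v), f e) = a ∧
        x = (Finset.univ.filter (fun e => dst e = v)).sup
          (fun e => tau src dst w s (src e) (f e : ℝ) + (w e : EReal))} := by
  haveI := Classical.decEq E
  have haR : (a : ℝ) ≠ 0 := by positivity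
  apply le_antisymm
  · -- LHS ≤ RHS : every element of the integer set is in the real set
    apply sInf_le_sInf
    rintro x ⟨f, hsum, hx⟩
    refine ⟨fun e => (f e : ℝ) / a, fun e _ => by positivity, ?_, ?_⟩
    · rw [← Finset.sum_div]
      rw [show (∑ e ∈ Finset.univ.filter (fun e => dst e = v), ((f e : ℝ)))
          = ((∑ e ∈ Finset.univ.filter (fun e => dst e = v), f e : ℕ) : ℝ) by push_cast; ring]
      rw [hsum, div_self haR]
    · rw [hx]
      apply Finset.sup_congr rfl
      intro e _
      rw [div_mul_cancel₀ _ haR]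
  · -- RHS ≤ LHS
    apply le_sInf
    rintro x ⟨α, hα0, hα1, hx⟩
    set D := Finset.univ.filter (fun e => dst e = v) with hD
    set g : E → ℕ := fun e => (⌈α e * a⌉).toNat with hg
    have hgsum : a ≤ ∑ e ∈ D, g e := by
      have h1 : (a : ℝ) ≤ ∑ e ∈ D, (g e : ℝ) := by
        calc (a : ℝ) = ∑ e ∈ D, α e * a := by rw [← Finset.sum_mul, hα1, one_mul]
        _ ≤ ∑ e ∈ D, (g e : ℝ) := by
            apply Finset.sum_le_sum
            intro e he
            have hnn : 0 ≤ α e * a := by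
              have := hα0 e (by simpa [hD] using he)
              positivity
            have : (g e : ℝ) = ((⌈α e * a⌉ : ℤ) : ℝ) := by
              rw [hg]; norm_cast; exact Int.toNat_of_nonneg (Int.ceil_nonneg hnn)
            rw [this]
            exact Int.le_ceil _
      have : ((a : ℕ) : ℝ) ≤ ((∑ e ∈ D, g e : ℕ) : ℝ) := by push_cast; exact h1
      exact_mod_cast this
    obtain ⟨f, hf1, hf2⟩ := exists_le_sum_eq D g a hgsum
    refine le_trans (sInf_le ⟨f, hf2, rfl⟩) ?_
    rw [hx]
    apply Finset.sup_mono_fun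
    intro e he
    have hnn : 0 ≤ α e * a := by
      have := hα0 e (by simpa [hD] using he)
      positivity
    have h1 : tau src dst w s (src e) ((f e : ℝ)) ≤ tau src dst w s (src e) (α e * a) := by
      have h2 : tau src dst w s (src e) ((f e : ℝ)) ≤ tau src dst w s (src e) ((g e : ℝ)) :=
        tau_mono _ _ _ _ _ (by exact_mod_cast hf1 e he)
      have h3 : (g e : ℝ) = ((⌈α e * a⌉ : ℤ) : ℝ) := by
        rw [hg]; norm_cast; exact Int.toNat_of_nonneg (Int.ceil_nonneg hnn)
      rw [h3] at h2
      rwa [tau_ceil_eq] at h2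
    exact add_le_add_left h1 _
end

section
/- For every 1 ≤ i ≤ n, the function j ↦ τ′(v_i, q^j) is monotone nondecreasing in the integer j: for all integers j ≤ j′, τ′(v_i, q^j) ≤ τ′(v_i, q^{j′}) in ℝ ∪ {−∞,+∞}. -/
open scoped BigOperators

theorem stmt12
    {n : ℕ} (hn : 0 < n) {E : Type} [Fintype E]
    (src dst : E → Fin n) (w : E → ℝ)
    (htopo : ∀ e, src e < dst e)
    (hin : ∀ v : Fin n, v ≠ ⟨0, hn⟩ → ∃ e, dst e = v)
    (q : ℝ) (hq : 1 < q)
    (T : Fin n → ℝ → EReal)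
    (hT0 : ∀ v : Fin n, T v 0 = ⊥)
    (hTs1 : ∀ a : ℝ, 0 < a → a ≤ 1 → T ⟨0, hn⟩ a = 0)
    (hTs2 : ∀ a : ℝ, 1 < a → T ⟨0, hn⟩ a = ⊤)
    (hTrec : ∀ v : Fin n, v ≠ ⟨0, hn⟩ → ∀ j : ℤ,
      T v (q ^ j) = sInf {x : EReal |
        ∃ α : E → ℝ, (∀ e, dst e = v → 0 ≤ α e) ∧
          (∑ e ∈ Finset.univ.filter (fun e => dst e = v), α e) = 1 ∧
          x = (Finset.univ.filter (fun e => dst e = v)).sup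
            (fun e => T (src e)
              (if α e = 0 then 0 else q ^ ⌊(j : ℝ) + Real.logb q (α e)⌋) + (w e : EReal))}) :
    ∀ v : Fin n, ∀ j j' : ℤ, j ≤ j' → T v (q ^ j) ≤ T v (q ^ j') := by
  have hq0 : (0:ℝ) < q := lt_trans one_pos hq
  suffices H : ∀ m : ℕ, ∀ v : Fin n, v.val < m →
      ∀ j j' : ℤ, j ≤ j' → T v (q ^ j) ≤ T v (q ^ j') by
    intro v; exact H n v v.isLt
  intro m
  induction m with
  | zero => intro v hv; omega
  | succ m IHm =>
    intro v hvm j j' hjj'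
    have IH : ∀ u : Fin n, u < v → ∀ j j' : ℤ, j ≤ j' → T u (q ^ j) ≤ T u (q ^ j') := by
      intro u hu; exact IHm u (by omega)
    by_cases hv : v = ⟨0, hn⟩
    · subst hv
      rcases le_or_gt j' 0 with h' | h'
      · have hj : q ^ j ≤ 1 := zpow_le_one_of_nonpos₀ hq.le (le_trans hjj' h')
        have hj' : q ^ j' ≤ 1 := zpow_le_one_of_nonpos₀ hq.le h'
        rw [hTs1 _ (zpow_pos hq0 j) hj, hTs1 _ (zpow_pos hq0 j') hj']
      · rw [hTs2 _ (one_lt_zpow₀ hq h')]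
        exact le_top
    · rw [hTrec v hv j, hTrec v hv j']
      apply le_sInf
      rintro x' ⟨α, hαnn, hαsum, rfl⟩
      refine le_trans (sInf_le ⟨α, hαnn, hαsum, rfl⟩) ?_
      apply Finset.sup_mono_fun
      intro e he
      by_cases hα : α e = 0
      · simp [hα]
      · simp only [if_neg hα]
        have hfloor : ⌊(j : ℝ) + Real.logb q (α e)⌋ ≤ ⌊(j' : ℝ) + Real.logb q (α e)⌋ :=
          Int.floor_le_floor (add_le_add_left (by exact_mod_cast hjj') _)
        have hsrc : src e < v := by
          have := htopo e
          rwa [(Finset.mem_filter.mp he).2] at this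
        exact add_le_add_left (IH (src e) hsrc _ _ hfloor) _
end
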